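/- arXiv:1402.4919 — 5 statements merged into one kernel-verified Lean document; each statement's English description precedes it below -/
import Mathlib

section
/- Let K be an infinite field, n ∈ ℕ, and G ⊆ GL_n(K) be a subgroup endowed with a topology making it a topological group, such that G has an open subgroup which is soluble (respectively, nilpotent). Then G has an open normal subgroup which is soluble (respectively, nilpotent). -/
open scoped Manifold
open Matrix

universe u

/-! ### Basic group-theoretic notions -/

/-- A subgroup is subnormal if it is the last term of a finite descending chain of
subgroups starting at `⊤`, each normal in its predecessor. -/
def IsSubnormal {G : Type*} [Group G] (S : Subgroup G) : Prop :=
  ∃ (k : ℕ) (c : ℕ → Subgroup G), c 0 = ⊤ ∧ c k = S ∧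
    (∀ i, c (i + 1) ≤ c i) ∧ ∀ i, ∀ x ∈ c i, ∀ y ∈ c (i + 1), x * y * x⁻¹ ∈ c (i + 1)

/-- A topological group is nearly simple if every closed subnormal subgroup is
open or discrete. -/
def NearlySimple (G : Type*) [Group G] [TopologicalSpace G] : Prop :=
  ∀ S : Subgroup G, IsSubnormal S → IsClosed (S : Set G) →
    IsOpen (S : Set G) ∨ DiscreteTopology S

/-- Isomorphism of topological groups. -/
def TopGrpIso (G H : Type*) [Group G] [TopologicalSpace G] [Group H] [TopologicalSpace H] :
    Prop :=
  ∃ e : G ≃* H, Continuous e ∧ Continuous e.symm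

/-- A topological group is topologically simple if it is non-trivial and its only
closed normal subgroups are `⊥` and `⊤`. -/
def TopologicallySimple (G : Type*) [Group G] [TopologicalSpace G] : Prop :=
  Nontrivial G ∧ ∀ N : Subgroup G, N.Normal → IsClosed (N : Set G) → N = ⊥ ∨ N = ⊤

/-- The radical of a group: the union of all soluble normal subgroups. -/
def radicalSet (G : Type*) [Group G] : Set G :=
  ⋃ N ∈ {N : Subgroup G | N.Normal ∧ IsSolvable N}, (N : Set G)

/-- Exactly one of two propositions holds. -/
def ExactlyOne2 (a b : Prop) : Prop := (a ∨ b) ∧ ¬(a ∧ b)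

/-- Exactly one of four propositions holds. -/
def ExactlyOne4 (a b c d : Prop) : Prop :=
  (a ∨ b ∨ c ∨ d) ∧ ¬(a ∧ b) ∧ ¬(a ∧ c) ∧ ¬(a ∧ d) ∧ ¬(b ∧ c) ∧ ¬(b ∧ d) ∧ ¬(c ∧ d)

/-- Exactly one of five propositions holds. -/
def ExactlyOne5 (a b c d e : Prop) : Prop :=
  (a ∨ b ∨ c ∨ d ∨ e) ∧ ¬(a ∧ b) ∧ ¬(a ∧ c) ∧ ¬(a ∧ d) ∧ ¬(a ∧ e) ∧ ¬(b ∧ c) ∧ ¬(b ∧ d) ∧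
    ¬(b ∧ e) ∧ ¬(c ∧ d) ∧ ¬(c ∧ e) ∧ ¬(d ∧ e)

/-! ### p-adic Lie groups -/

/-- A `p`-adic Lie group structure on a topological group `G`: a finite-dimensional
analytic (here: smooth) manifold structure over `ℚ_[p]` making multiplication and
inversion smooth. -/
structure PadicLieGroup (p : ℕ) [Fact p.Prime] (G : Type*) [Group G] [TopologicalSpace G] where
  dim : ℕ
  charted : ChartedSpace (Fin dim → ℚ_[p]) G
  lie : letI := charted; LieGroup (𝓘(ℚ_[p], Fin dim → ℚ_[p])) (⊤ : ℕ∞) G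

variable {p : ℕ} [Fact p.Prime] {G : Type*} [Group G] [TopologicalSpace G]

/-- The adjoint representation: the derivative at `1` of conjugation by `g`,
an endomorphism of the Lie algebra `L(G) = Fin dim → ℚ_[p]` (the tangent space at `1`). -/
noncomputable def PadicLieGroup.Ad (h : PadicLieGroup p G) (g : G) :
    (Fin h.dim → ℚ_[p]) →L[ℚ_[p]] (Fin h.dim → ℚ_[p]) :=
  letI := h.charted
  mfderiv (𝓘(ℚ_[p], Fin h.dim → ℚ_[p])) (𝓘(ℚ_[p], Fin h.dim → ℚ_[p]))
    (fun x => g * x * g⁻¹) (1 : G)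

/-- The infinitesimal adjoint representation, `ad = L(Ad)`: the derivative of `Ad` at `1`. -/
noncomputable def PadicLieGroup.adRep (h : PadicLieGroup p G) :
    (Fin h.dim → ℚ_[p]) →L[ℚ_[p]] ((Fin h.dim → ℚ_[p]) →L[ℚ_[p]] (Fin h.dim → ℚ_[p])) :=
  letI := h.charted
  mfderiv (𝓘(ℚ_[p], Fin h.dim → ℚ_[p]))
    (𝓘(ℚ_[p], (Fin h.dim → ℚ_[p]) →L[ℚ_[p]] (Fin h.dim → ℚ_[p]))) h.Ad (1 : G)

/-- The Lie bracket on the Lie algebra of `G`: `⁅x, y⁆ = ad(x)(y)`. -/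
noncomputable def PadicLieGroup.bracket (h : PadicLieGroup p G) :
    (Fin h.dim → ℚ_[p]) → (Fin h.dim → ℚ_[p]) → (Fin h.dim → ℚ_[p]) :=
  fun x y => h.adRep x y

/-- The Lie algebra `L(H)` of a subgroup `H ⊆ G`: the tangent cone to `H` at the
identity, read in the chart at the identity. -/
noncomputable def PadicLieGroup.Lsub (h : PadicLieGroup p G) (H : Subgroup G) :
    Set (Fin h.dim → ℚ_[p]) :=
  letI := h.charted
  tangentConeAt ℚ_[p]
    ((chartAt (Fin h.dim → ℚ_[p]) (1 : G)) ''
      ((H : Set G) ∩ (chartAt (Fin h.dim → ℚ_[p]) (1 : G)).source))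
    ((chartAt (Fin h.dim → ℚ_[p]) (1 : G)) 1)

/-- A `p`-adic Lie group is extraordinary if it is nearly simple, `G = ker Ad_G`, and the
commutator subgroup of every open subnormal subgroup is non-discrete. -/
def PadicLieGroup.Extraordinary (h : PadicLieGroup p G) : Prop :=
  NearlySimple G ∧
    (∀ g : G, h.Ad g = ContinuousLinearMap.id ℚ_[p] (Fin h.dim → ℚ_[p])) ∧
    ∀ S : Subgroup G, IsSubnormal S → IsOpen (S : Set G) → ¬ DiscreteTopology (commutator S)

/-- Linearity of a `p`-adic Lie group. -/
def PadicLinear (p : ℕ) [Fact p.Prime] (G : Type*) [Group G] [TopologicalSpace G] : Prop :=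
  ∃ (n : ℕ) (f : G →* GL (Fin n) ℚ_[p]), Continuous f ∧ Function.Injective f

/-! ### Bracket algebras (Lie-algebra notions for a not-yet-verified bracket) -/

section Bracket

variable (K : Type*) [Field K] {V : Type*} [AddCommGroup V] [Module K V]

/-- A submodule is an ideal for a bracket if it absorbs brackets on both sides. -/
def IsBracketIdeal (b : V → V → V) (N : Submodule K V) : Prop :=
  ∀ x : V, ∀ y ∈ N, b x y ∈ N ∧ b y x ∈ N

/-- Derived series of a submodule with respect to a bracket. -/
def bracketDerivedSeries (b : V → V → V) (N : Submodule K V) : ℕ → Submodule K V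
  | 0 => N
  | (k + 1) => Submodule.span K
      {z | ∃ x ∈ bracketDerivedSeries b N k, ∃ y ∈ bracketDerivedSeries b N k, z = b x y}

/-- Solubility of a submodule with respect to a bracket. -/
def IsBracketSoluble (b : V → V → V) (N : Submodule K V) : Prop :=
  ∃ n, bracketDerivedSeries K b N n = ⊥

/-- The radical of a bracket algebra: the supremum of all soluble ideals. -/
def bracketRadical (b : V → V → V) : Submodule K V :=
  sSup {N | IsBracketIdeal K b N ∧ IsBracketSoluble K b N}

/-- Simplicity of a bracket algebra: non-abelian, and no ideals besides `⊥` and `⊤`. -/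
def IsBracketSimple (b : V → V → V) : Prop :=
  (∃ x y, b x y ≠ 0) ∧ ∀ N : Submodule K V, IsBracketIdeal K b N → N = ⊥ ∨ N = ⊤

end Bracket

/-! ### Automorphism groups of Lie algebras -/

/-- The automorphism group of a bracket on `Fin d → ℚ_[p]`, as a subgroup of
`GL (Fin d) ℚ_[p]`. -/
def autGroupOfBracket {p : ℕ} [Fact p.Prime] {d : ℕ}
    (b : (Fin d → ℚ_[p]) → (Fin d → ℚ_[p]) → (Fin d → ℚ_[p])) :
    Subgroup (GL (Fin d) ℚ_[p]) where
  carrier := {g | ∀ x y, (g : Matrix (Fin d) (Fin d) ℚ_[p]).mulVec (b x y)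
      = b ((g : Matrix (Fin d) (Fin d) ℚ_[p]).mulVec x)
          ((g : Matrix (Fin d) (Fin d) ℚ_[p]).mulVec y)}
  one_mem' := by
    intro x y
    simp [Matrix.one_mulVec]
  mul_mem' := by
    intro a c ha hc x y
    simp only [Units.val_mul, ← Matrix.mulVec_mulVec]
    rw [hc x y, ha]
  inv_mem' := by
    intro a ha x y
    have inva : ∀ v, (a : Matrix (Fin d) (Fin d) ℚ_[p]).mulVec
        (((a⁻¹ : GL (Fin d) ℚ_[p]) : Matrix (Fin d) (Fin d) ℚ_[p]).mulVec v) = v := by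
      intro v
      rw [Matrix.mulVec_mulVec]
      have h1 : (a : Matrix (Fin d) (Fin d) ℚ_[p]) *
          ((a⁻¹ : GL (Fin d) ℚ_[p]) : Matrix (Fin d) (Fin d) ℚ_[p]) = 1 := by
        rw [← Units.val_mul, mul_inv_cancel, Units.val_one]
      rw [h1, Matrix.one_mulVec]
    have ainv : ∀ v, ((a⁻¹ : GL (Fin d) ℚ_[p]) : Matrix (Fin d) (Fin d) ℚ_[p]).mulVec
        ((a : Matrix (Fin d) (Fin d) ℚ_[p]).mulVec v) = v := by
      intro v
      rw [Matrix.mulVec_mulVec]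
      have h1 : ((a⁻¹ : GL (Fin d) ℚ_[p]) : Matrix (Fin d) (Fin d) ℚ_[p]) *
          (a : Matrix (Fin d) (Fin d) ℚ_[p]) = 1 := by
        rw [← Units.val_mul, inv_mul_cancel, Units.val_one]
      rw [h1, Matrix.one_mulVec]
    conv_lhs => rw [show b x y = (a : Matrix (Fin d) (Fin d) ℚ_[p]).mulVec
      (b (((a⁻¹ : GL (Fin d) ℚ_[p]) : Matrix (Fin d) (Fin d) ℚ_[p]).mulVec x)
         (((a⁻¹ : GL (Fin d) ℚ_[p]) : Matrix (Fin d) (Fin d) ℚ_[p]).mulVec y)) from by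
        rw [ha]; rw [inva, inva]]
    rw [ainv]

/-- `Q` is isomorphic (as a topological group) to a compact open subgroup of `Aut(𝔰)`
for some simple `p`-adic Lie algebra `𝔰`. -/
def IsoToCompactOpenLieAut (p : ℕ) [Fact p.Prime] (Q : Type*) [Group Q]
    [TopologicalSpace Q] : Prop :=
  ∃ (m : ℕ) (_ : LieRing (Fin m → ℚ_[p])) (_ : LieAlgebra ℚ_[p] (Fin m → ℚ_[p])),
    LieAlgebra.IsSimple ℚ_[p] (Fin m → ℚ_[p]) ∧
    ∃ H : Subgroup (autGroupOfBracket (fun x y : Fin m → ℚ_[p] => ⁅x, y⁆)),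
      IsOpen (H : Set (autGroupOfBracket (fun x y : Fin m → ℚ_[p] => ⁅x, y⁆))) ∧
      CompactSpace H ∧ TopGrpIso Q H

/-- `Q` is isomorphic (as a topological group) to an open subgroup of `Aut(𝔰)`
for some simple `p`-adic Lie algebra `𝔰`. -/
def IsoToOpenLieAut (p : ℕ) [Fact p.Prime] (Q : Type*) [Group Q]
    [TopologicalSpace Q] : Prop :=
  ∃ (m : ℕ) (_ : LieRing (Fin m → ℚ_[p])) (_ : LieAlgebra ℚ_[p] (Fin m → ℚ_[p])),
    LieAlgebra.IsSimple ℚ_[p] (Fin m → ℚ_[p]) ∧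
    ∃ H : Subgroup (autGroupOfBracket (fun x y : Fin m → ℚ_[p] => ⁅x, y⁆)),
      IsOpen (H : Set (autGroupOfBracket (fun x y : Fin m → ℚ_[p] => ⁅x, y⁆))) ∧
      TopGrpIso Q H

/-! ### Elementary groups and the construction rank -/

/-- Totally disconnected, locally compact, second countable topological group. -/
def TDLCSC (G : Type u) [Group G] [TopologicalSpace G] : Prop :=
  IsTopologicalGroup G ∧ LocallyCompactSpace G ∧ T2Space G ∧ TotallyDisconnectedSpace G ∧
    SecondCountableTopology G

/-- The class `Σ₀`: countable discrete groups and metrizable profinite groups. -/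
def SigmaZero (G : Type u) [Group G] [TopologicalSpace G] : Prop :=
  TDLCSC G ∧ ((Countable G ∧ DiscreteTopology G) ∨
    (CompactSpace G ∧ T2Space G ∧ TotallyDisconnectedSpace G ∧
      TopologicalSpace.MetrizableSpace G))

/-- The classes `Σ_λ` of Wesolek's construction rank: `Σ₀` consists of countable discrete
and metrizable profinite groups, `Σ_{μ+1}` is obtained from `Σ_μ` by extensions with
quotient in `Σ₀` and by countable ascending unions of open subgroups, and limit stages
are unions of the previous stages. -/
inductive SigmaClass : Ordinal.{u} → ∀ (G : Type u) [Group G] [TopologicalSpace G], Prop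
  | base (o : Ordinal.{u}) (G : Type u) [Group G] [TopologicalSpace G] :
      SigmaZero G → SigmaClass o G
  | ext (o : Ordinal.{u}) (G : Type u) [Group G] [TopologicalSpace G]
      (N : Subgroup G) (hN : N.Normal) : TDLCSC G → IsClosed (N : Set G) →
      SigmaClass o N → SigmaZero (G ⧸ N) → SigmaClass (o + 1) G
  | union (o : Ordinal.{u}) (G : Type u) [Group G] [TopologicalSpace G] (V : ℕ → Subgroup G) :
      TDLCSC G → Monotone V → (∀ n, IsOpen ((V n : Set G))) → (∀ x : G, ∃ n, x ∈ V n) →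
      (∀ n, SigmaClass o (V n)) → SigmaClass (o + 1) G
  | mono (o o' : Ordinal.{u}) (G : Type u) [Group G] [TopologicalSpace G] :
      o ≤ o' → SigmaClass o G → SigmaClass o' G

/-- A topological group is elementary if it lies in some class `Σ_λ`. -/
def IsElementary (G : Type u) [Group G] [TopologicalSpace G] : Prop :=
  ∃ o : Ordinal.{u}, SigmaClass o G

/-- The construction rank: the least `λ` with `G ∈ Σ_λ`. -/
noncomputable def erk (G : Type u) [Group G] [TopologicalSpace G] : Ordinal.{u} :=
  sInf {o : Ordinal.{u} | SigmaClass o G}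

/-- The "exactly one" alternative for the subfactors in Theorem B. -/
def TheoremBAlternative (p : ℕ) [Fact p.Prime] (Q : Type*) [Group Q] [TopologicalSpace Q] :
    Prop :=
  ExactlyOne4
    (Countable Q ∧ DiscreteTopology Q)
    (TopGrpIso Q (Multiplicative ℤ_[p]))
    ((∃ hQ : PadicLieGroup p Q, hQ.Extraordinary) ∧ SigmaCompactSpace Q)
    (IsoToCompactOpenLieAut p Q)

section Stmt3AuxSection
open MvPolynomial

namespace Stmt3Aux

variable {K : Type*} [Field K] {n : ℕ}

abbrev Idx (n : ℕ) := (Fin n × Fin n) ⊕ (Fin n × Fin n)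

/-- The "coordinates" of `g ∈ GL_n(K)`: entries of `g` and of `g⁻¹`. -/
def Emb (g : GL (Fin n) K) : Idx n → K :=
  Sum.elim (fun ij => (g : Matrix (Fin n) (Fin n) K) ij.1 ij.2)
    (fun ij => ((g⁻¹ : GL (Fin n) K) : Matrix (Fin n) (Fin n) K) ij.1 ij.2)

lemma Emb_injective : Function.Injective (Emb (K := K) (n := n)) := by
  intro g h hgh
  ext i j
  exact congrFun hgh (Sum.inl (i, j))

/-- A self-map of `GL_n(K)` which is polynomial in the coordinates. -/
def PolyMap (φ : GL (Fin n) K → GL (Fin n) K) : Prop :=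
  ∃ q : Idx n → MvPolynomial (Idx n) K,
    ∀ g i, Emb (φ g) i = eval (Emb g) (q i)

lemma polyMap_id : PolyMap (fun g : GL (Fin n) K => g) :=
  ⟨fun i => X i, fun g i => by rw [eval_X]⟩

lemma polyMap_const (a : GL (Fin n) K) : PolyMap (fun _ => a) :=
  ⟨fun i => C (Emb a i), fun g i => by rw [eval_C]⟩

lemma polyMap_inv {φ : GL (Fin n) K → GL (Fin n) K} (hφ : PolyMap φ) :
    PolyMap (fun g => (φ g)⁻¹) := by
  obtain ⟨q, hq⟩ := hφ
  refine ⟨fun i => q i.swap, fun g i => ?_⟩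
  have h1 : Emb ((φ g)⁻¹) i = Emb (φ g) i.swap := by
    cases i with
    | inl ij => rfl
    | inr ij => simp [Emb]
  rw [h1, hq]

lemma polyMap_mul {φ ψ : GL (Fin n) K → GL (Fin n) K} (hφ : PolyMap φ) (hψ : PolyMap ψ) :
    PolyMap (fun g => φ g * ψ g) := by
  obtain ⟨q1, h1⟩ := hφ
  obtain ⟨q2, h2⟩ := hψ
  refine ⟨Sum.elim (fun ij => ∑ k, q1 (Sum.inl (ij.1, k)) * q2 (Sum.inl (k, ij.2)))
    (fun ij => ∑ k, q2 (Sum.inr (ij.1, k)) * q1 (Sum.inr (k, ij.2))), fun g i => ?_⟩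
  cases i with
  | inl ij =>
    have : Emb (φ g * ψ g) (Sum.inl ij)
        = ∑ k, Emb (φ g) (Sum.inl (ij.1, k)) * Emb (ψ g) (Sum.inl (k, ij.2)) := by
      simp [Emb, Units.val_mul, Matrix.mul_apply]
    rw [this]
    simp only [h1, h2, Sum.elim_inl, map_sum, _root_.map_mul]
  | inr ij =>
    have : Emb (φ g * ψ g) (Sum.inr ij)
        = ∑ k, Emb (ψ g) (Sum.inr (ij.1, k)) * Emb (φ g) (Sum.inr (k, ij.2)) := by
      simp [Emb, _root_.mul_inv_rev, Units.val_mul, Matrix.mul_apply]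
    rw [this]
    simp only [h1, h2, Sum.elim_inr, map_sum, _root_.map_mul]

/-- The vanishing ideal of a subset of `GL_n(K)`. -/
def Jid (S : Set (GL (Fin n) K)) : Ideal (MvPolynomial (Idx n) K) where
  carrier := {p | ∀ g ∈ S, eval (Emb g) p = 0}
  zero_mem' := fun g _ => by simp
  add_mem' := fun {p} {q} hp hq g hg => by simp [map_add, hp g hg, hq g hg]
  smul_mem' := fun c p hp g hg => by simp [smul_eq_mul, hp g hg]

/-- The "Zariski closure" of a subset of `GL_n(K)`. -/
def clo (S : Set (GL (Fin n) K)) : Set (GL (Fin n) K) :=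
  {g | ∀ p ∈ Jid S, eval (Emb g) p = 0}

lemma subset_clo {S : Set (GL (Fin n) K)} : S ⊆ clo S := fun g hg p hp => hp g hg

lemma Jid_anti {S T : Set (GL (Fin n) K)} (h : S ⊆ T) : Jid T ≤ Jid S :=
  fun p hp g hg => hp g (h hg)

lemma clo_mono {S T : Set (GL (Fin n) K)} (h : S ⊆ T) : clo S ⊆ clo T :=
  fun g hg p hp => hg p (Jid_anti h hp)

lemma clo_eq_of_Jid_eq {S T : Set (GL (Fin n) K)} (h : Jid S = Jid T) : clo S = clo T := by
  unfold clo
  rw [h]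

lemma eval_bind₁' (f : Idx n → K) (q : Idx n → MvPolynomial (Idx n) K)
    (p : MvPolynomial (Idx n) K) :
    eval f (bind₁ q p) = eval (fun i => eval f (q i)) p :=
  eval₂Hom_bind₁ (RingHom.id K) f q p

/-- Push a point of the closure of `S` through a polynomial map. -/
lemma polyMap_clo {φ : GL (Fin n) K → GL (Fin n) K} (hφ : PolyMap φ)
    {S T : Set (GL (Fin n) K)} (h : ∀ g ∈ S, φ g ∈ clo T) {g : GL (Fin n) K}
    (hg : g ∈ clo S) : φ g ∈ clo T := by
  obtain ⟨q, hq⟩ := hφ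
  intro p hp
  have hb : bind₁ q p ∈ Jid S := by
    intro s hs
    rw [eval_bind₁', show (fun i => eval (Emb s) (q i)) = Emb (φ s) from
      funext fun i => (hq s i).symm]
    exact h s hs p hp
  have hz := hg _ hb
  rwa [eval_bind₁', show (fun i => eval (Emb g) (q i)) = Emb (φ g) from
    funext fun i => (hq g i).symm] at hz


section SubgroupLevel

variable {G : Subgroup (GL (Fin n) K)}

/-- The image of a subgroup of `G` in `GL_n(K)`. -/
def sval (W : Subgroup ↥G) : Set (GL (Fin n) K) := Subtype.val '' (W : Set ↥G)

lemma sval_mono {W W' : Subgroup ↥G} (h : W ≤ W') : sval W ⊆ sval W' :=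
  Set.image_mono h

/-- The intersection with `G` of the Zariski closure of a subgroup of `G`. -/
def CL (W : Subgroup ↥G) : Subgroup ↥G where
  carrier := {x | (x : GL (Fin n) K) ∈ clo (sval W)}
  one_mem' := subset_clo ⟨1, W.one_mem, rfl⟩
  inv_mem' := by
    intro x hx
    have h1 : ∀ g ∈ sval W, (fun g : GL (Fin n) K => ((fun g => g) g)⁻¹) g ∈ clo (sval W) := by
      rintro g ⟨w, hw, rfl⟩
      exact subset_clo ⟨w⁻¹, W.inv_mem hw, rfl⟩
    exact polyMap_clo (polyMap_inv polyMap_id) h1 hx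
  mul_mem' := by
    intro x y hx hy
    have h1 : ∀ a ∈ sval W, ∀ z ∈ clo (sval W), a * z ∈ clo (sval W) := by
      rintro a ⟨w, hw, rfl⟩ z hz
      have h : ∀ g ∈ sval W, (fun g : GL (Fin n) K => (w : GL (Fin n) K) * ((fun g => g) g)) g
          ∈ clo (sval W) := by
        rintro g ⟨u, hu, rfl⟩
        exact subset_clo ⟨w * u, W.mul_mem hw hu, rfl⟩
      exact polyMap_clo (polyMap_mul (polyMap_const _) polyMap_id) h hz
    have h2 : ∀ a ∈ sval W,
        (fun g : GL (Fin n) K => ((fun g => g) g) * ((fun _ => (y : GL (Fin n) K)) g)) a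
          ∈ clo (sval W) := fun a ha => h1 a ha _ hy
    exact polyMap_clo (polyMap_mul polyMap_id (polyMap_const _)) h2 hx

lemma mem_CL {W : Subgroup ↥G} {x : ↥G} : x ∈ CL W ↔ (x : GL (Fin n) K) ∈ clo (sval W) :=
  Iff.rfl

lemma le_CL (W : Subgroup ↥G) : W ≤ CL W := fun x hx => subset_clo ⟨x, hx, rfl⟩

lemma CL_mono {W W' : Subgroup ↥G} (h : W ≤ W') : CL W ≤ CL W' :=
  fun _ hx => clo_mono (sval_mono h) hx

open scoped commutatorElement in
lemma commutator_CL_le (A B : Subgroup ↥G) : ⁅CL A, CL B⁆ ≤ CL ⁅A, B⁆ := by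
  rw [Subgroup.commutator_le]
  have step1 : ∀ a ∈ A, ∀ y ∈ CL B, (⁅a, y⁆ : ↥G) ∈ CL ⁅A, B⁆ := by
    intro a ha y hy
    have hpm : PolyMap (fun g : GL (Fin n) K =>
        (a : GL (Fin n) K) * ((fun g => g) g) * ((fun _ => ((a : ↥G)⁻¹ : ↥G) : ↥G → ↥G) 1 :
          GL (Fin n) K) * ((fun g : GL (Fin n) K => g) g)⁻¹) :=
      polyMap_mul (polyMap_mul (polyMap_mul (polyMap_const _) polyMap_id) (polyMap_const _))
        (polyMap_inv polyMap_id)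
    have h : ∀ g ∈ sval B, (a : GL (Fin n) K) * g * ((a⁻¹ : ↥G) : GL (Fin n) K) * g⁻¹
        ∈ clo (sval ⁅A, B⁆) := by
      rintro g ⟨b, hb, rfl⟩
      exact subset_clo ⟨⁅a, b⁆, Subgroup.commutator_mem_commutator ha hb, rfl⟩
    exact polyMap_clo hpm h hy
  intro x hx y hy
  have hpm : PolyMap (fun g : GL (Fin n) K =>
      ((fun g => g) g) * ((y : ↥G) : GL (Fin n) K) * ((fun g : GL (Fin n) K => g) g)⁻¹ *
        (((y⁻¹ : ↥G)) : GL (Fin n) K)) :=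
    polyMap_mul (polyMap_mul (polyMap_mul polyMap_id (polyMap_const _))
      (polyMap_inv polyMap_id)) (polyMap_const _)
  have h : ∀ g ∈ sval A, g * ((y : ↥G) : GL (Fin n) K) * g⁻¹ * (((y⁻¹ : ↥G)) : GL (Fin n) K)
      ∈ clo (sval ⁅A, B⁆) := by
    rintro g ⟨a, ha, rfl⟩
    exact step1 a ha y hy
  exact polyMap_clo hpm h hx

lemma CL_bot : CL (⊥ : Subgroup ↥G) = ⊥ := by
  refine le_antisymm ?_ (le_CL ⊥)
  intro x hx
  have hmem : ∀ i : Idx n, (X i - C (Emb ((1 : ↥G) : GL (Fin n) K) i)) ∈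
      Jid (sval (⊥ : Subgroup ↥G)) := by
    rintro i g ⟨w, hw, rfl⟩
    simp only [SetLike.mem_coe, Subgroup.mem_bot] at hw
    subst hw
    simp
  have heq : ∀ i : Idx n, Emb ((x : ↥G) : GL (Fin n) K) i = Emb ((1 : ↥G) : GL (Fin n) K) i := by
    intro i
    have := hx _ (hmem i)
    simpa [sub_eq_zero] using this
  have : ((x : ↥G) : GL (Fin n) K) = ((1 : ↥G) : GL (Fin n) K) := Emb_injective (funext heq)
  have : (x : ↥G) = 1 := Subtype.ext (by simpa using this)
  simpa [Subgroup.mem_bot] using this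

end SubgroupLevel


section Series

variable {A : Type*} [Group A]

/-- Derived series of a subgroup, computed in the ambient group. -/
def dIter (H : Subgroup A) : ℕ → Subgroup A
  | 0 => H
  | k + 1 => ⁅dIter H k, dIter H k⁆

/-- Lower central series of a subgroup, computed in the ambient group. -/
def lIter (H : Subgroup A) : ℕ → Subgroup A
  | 0 => H
  | k + 1 => ⁅lIter H k, H⁆

lemma map_derivedSeries (H : Subgroup A) (k : ℕ) :
    (derivedSeries ↥H k).map H.subtype = dIter H k := by
  induction k with
  | zero =>
    rw [derivedSeries_zero, ← MonoidHom.range_eq_map, Subgroup.range_subtype]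
    rfl
  | succ k ih => rw [derivedSeries_succ, Subgroup.map_commutator, ih]; rfl

lemma map_lowerCentralSeries (H : Subgroup A) (k : ℕ) :
    (Subgroup.lowerCentralSeries (⊤ : Subgroup ↥H) k).map H.subtype = lIter H k := by
  induction k with
  | zero =>
    rw [lowerCentralSeries_zero, ← MonoidHom.range_eq_map, Subgroup.range_subtype]
    rfl
  | succ k ih =>
    have : Subgroup.lowerCentralSeries (⊤ : Subgroup ↥H) (k + 1) = ⁅Subgroup.lowerCentralSeries (⊤ : Subgroup ↥H) k, (⊤ : Subgroup ↥H)⁆ := rfl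
    rw [this, Subgroup.map_commutator, ih, ← MonoidHom.range_eq_map, Subgroup.range_subtype]
    rfl

lemma isSolvable_iff_dIter (H : Subgroup A) : IsSolvable ↥H ↔ ∃ k, dIter H k = ⊥ := by
  rw [IsSolvable, isSolvable_def]
  refine exists_congr fun k => ?_
  rw [← map_derivedSeries, Subgroup.map_eq_bot_iff_of_injective _ H.subtype_injective]

lemma isNilpotent_iff_lIter (H : Subgroup A) : Group.IsNilpotent ↥H ↔ ∃ k, lIter H k = ⊥ := by
  rw [nilpotent_iff_lowerCentralSeries]
  refine exists_congr fun k => ?_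
  rw [← map_lowerCentralSeries, Subgroup.map_eq_bot_iff_of_injective _ H.subtype_injective]

lemma isSolvable_of_le {U W : Subgroup A} (h : U ≤ W) (hW : IsSolvable ↥W) : IsSolvable ↥U := by
  haveI : Group.IsSolvable ↥W := hW
  exact solvable_of_solvable_injective (Subgroup.inclusion_injective h)

lemma isNilpotent_of_le {U W : Subgroup A} (h : U ≤ W) (hW : Group.IsNilpotent ↥W) :
    Group.IsNilpotent ↥U := by
  haveI := hW
  exact nilpotent_of_surjective (Subgroup.subgroupOfEquivOfLe h).toMonoidHom
    (MulEquiv.surjective _)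

lemma isSolvable_map {B : Type*} [Group B] (f : A →* B) (hf : Function.Injective f)
    {U : Subgroup A} (hU : IsSolvable ↥U) : IsSolvable ↥(U.map f) := by
  haveI : Group.IsSolvable ↥U := hU
  exact solvable_of_solvable_injective
    (f := (U.equivMapOfInjective f hf).symm.toMonoidHom)
    (MulEquiv.injective (U.equivMapOfInjective f hf).symm)

lemma isNilpotent_map {B : Type*} [Group B] (f : A →* B) (hf : Function.Injective f)
    {U : Subgroup A} (hU : Group.IsNilpotent ↥U) : Group.IsNilpotent ↥(U.map f) := by
  haveI := hU
  exact nilpotent_of_surjective (U.equivMapOfInjective f hf).toMonoidHom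
    (MulEquiv.surjective _)

end Series

section Transfer

variable {G : Subgroup (GL (Fin n) K)}

lemma dIter_CL_le (W : Subgroup ↥G) (k : ℕ) : dIter (CL W) k ≤ CL (dIter W k) := by
  induction k with
  | zero => exact le_rfl
  | succ k ih =>
    calc dIter (CL W) (k + 1) = ⁅dIter (CL W) k, dIter (CL W) k⁆ := rfl
    _ ≤ ⁅CL (dIter W k), CL (dIter W k)⁆ := Subgroup.commutator_mono ih ih
    _ ≤ CL ⁅dIter W k, dIter W k⁆ := commutator_CL_le _ _
    _ = CL (dIter W (k + 1)) := rfl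

lemma lIter_CL_le (W : Subgroup ↥G) (k : ℕ) : lIter (CL W) k ≤ CL (lIter W k) := by
  induction k with
  | zero => exact le_rfl
  | succ k ih =>
    calc lIter (CL W) (k + 1) = ⁅lIter (CL W) k, CL W⁆ := rfl
    _ ≤ ⁅CL (lIter W k), CL W⁆ := Subgroup.commutator_mono ih le_rfl
    _ ≤ CL ⁅lIter W k, W⁆ := commutator_CL_le _ _
    _ = CL (lIter W (k + 1)) := rfl

lemma CL_isSolvable {W : Subgroup ↥G} (hW : IsSolvable ↥W) : IsSolvable ↥(CL W) := by
  rw [isSolvable_iff_dIter] at hW ⊢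
  obtain ⟨k, hk⟩ := hW
  refine ⟨k, le_bot_iff.mp ?_⟩
  have := dIter_CL_le W k
  rwa [hk, CL_bot] at this

lemma CL_isNilpotent {W : Subgroup ↥G} (hW : Group.IsNilpotent ↥W) :
    Group.IsNilpotent ↥(CL W) := by
  rw [isNilpotent_iff_lIter] at hW ⊢
  obtain ⟨k, hk⟩ := hW
  refine ⟨k, le_bot_iff.mp ?_⟩
  have := lIter_CL_le W k
  rwa [hk, CL_bot] at this

end Transfer


section Master

variable {G : Subgroup (GL (Fin n) K)}

/-- Conjugation equivariance input: pushing the closure of a conjugate back. -/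
lemma conj_clo {U : Subgroup ↥G} {γ : ↥G} {x : ↥G}
    (hx : (x : GL (Fin n) K) ∈ clo (sval (U.map (MulAut.conj γ⁻¹).toMonoidHom))) :
    γ * x * γ⁻¹ ∈ CL U := by
  have hpm : PolyMap (fun g : GL (Fin n) K =>
      ((γ : ↥G) : GL (Fin n) K) * ((fun g => g) g) * (((γ⁻¹ : ↥G)) : GL (Fin n) K)) :=
    polyMap_mul (polyMap_mul (polyMap_const _) polyMap_id) (polyMap_const _)
  have h : ∀ g ∈ sval (U.map (MulAut.conj γ⁻¹).toMonoidHom),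
      ((γ : ↥G) : GL (Fin n) K) * g * (((γ⁻¹ : ↥G)) : GL (Fin n) K) ∈ clo (sval U) := by
    rintro g ⟨u, hu, rfl⟩
    simp only [SetLike.mem_coe, Subgroup.mem_map] at hu
    obtain ⟨w, hw, rfl⟩ := hu
    have h' : γ * ((MulAut.conj γ⁻¹).toMonoidHom w) * γ⁻¹ = w := by
      simp only [MulAut.conj_apply, MulEquiv.coe_toMonoidHom]
      group
    exact subset_clo ⟨w, hw, congrArg Subtype.val h'.symm⟩
  exact polyMap_clo hpm h hx

/-- The master lemma: any conjugation-stable, intersection-stable, `CL`-stable property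
which holds for some open subgroup holds for an open *normal* subgroup. -/
lemma master [TopologicalSpace ↥G] [IsTopologicalGroup ↥G]
    (P : Subgroup ↥G → Prop)
    (hle : ∀ {U W : Subgroup ↥G}, U ≤ W → P W → P U)
    (hconj : ∀ (U : Subgroup ↥G) (γ : ↥G), P U → P (U.map (MulAut.conj γ).toMonoidHom))
    (hCL : ∀ U : Subgroup ↥G, P U → P (CL U))
    (h : ∃ V : Subgroup ↥G, IsOpen (V : Set ↥G) ∧ P V) :
    ∃ N : Subgroup ↥G, N.Normal ∧ IsOpen (N : Set ↥G) ∧ P N := by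
  classical
  set F : Set (Subgroup ↥G) := {U | IsOpen (U : Set ↥G) ∧ P U} with hF
  have hFne : F.Nonempty := h
  -- conjugates stay in the family
  have hFconj : ∀ U ∈ F, ∀ γ : ↥G, U.map (MulAut.conj γ).toMonoidHom ∈ F := by
    rintro U ⟨hUo, hUP⟩ γ
    refine ⟨?_, hconj U γ hUP⟩
    have hcoe : (↑(U.map (MulAut.conj γ).toMonoidHom) : Set ↥G)
        = ⇑((Homeomorph.mulLeft γ).trans (Homeomorph.mulRight γ⁻¹)) '' (U : Set ↥G) := by
      rw [Subgroup.coe_map]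
      congr 1
    rw [hcoe]
    exact ((Homeomorph.mulLeft γ).trans (Homeomorph.mulRight γ⁻¹)).isOpen_image.mpr hUo
  -- intersections stay in the family
  have hFinter : ∀ U ∈ F, ∀ U' ∈ F, U ⊓ U' ∈ F := by
    rintro U ⟨hUo, hUP⟩ U' ⟨hU'o, _⟩
    refine ⟨?_, hle inf_le_left hUP⟩
    rw [Subgroup.coe_inf]
    exact hUo.inter hU'o
  -- Noetherian selection of a maximal vanishing ideal
  have hNoeth : IsNoetherian (MvPolynomial (Idx n) K) (MvPolynomial (Idx n) K) :=
    inferInstanceAs (IsNoetherianRing (MvPolynomial (Idx n) K))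
  have hwf : WellFounded ((· > ·) :
      Ideal (MvPolynomial (Idx n) K) → Ideal (MvPolynomial (Idx n) K) → Prop) :=
    isNoetherian_iff.mp hNoeth
  obtain ⟨J₀, hJ₀mem, hJ₀max⟩ := hwf.has_min ((fun U => Jid (sval U)) '' F) (hFne.image _)
  obtain ⟨U₀, hU₀F, hU₀J⟩ := hJ₀mem
  -- the closure of U₀ is normal
  have hnormal : (CL U₀).Normal := by
    constructor
    intro x hx γ
    set U₂ : Subgroup ↥G := U₀.map (MulAut.conj γ⁻¹).toMonoidHom with hU₂
    have hU₁F : U₀ ⊓ U₂ ∈ F := hFinter _ hU₀F _ (hFconj _ hU₀F γ⁻¹)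
    have hle1 : Jid (sval U₀) ≤ Jid (sval (U₀ ⊓ U₂)) := Jid_anti (sval_mono inf_le_left)
    have hmax := hJ₀max (Jid (sval (U₀ ⊓ U₂))) ⟨U₀ ⊓ U₂, hU₁F, rfl⟩
    have h0 : Jid (sval U₀) = J₀ := hU₀J
    have heq : Jid (sval (U₀ ⊓ U₂)) = Jid (sval U₀) := by
      rcases hle1.lt_or_eq with hlt | he
      · rw [h0] at hlt
        exact absurd hlt hmax
      · exact he.symm
    have hclo : clo (sval U₀) = clo (sval (U₀ ⊓ U₂)) := (clo_eq_of_Jid_eq heq).symm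
    have hx2 : (x : GL (Fin n) K) ∈ clo (sval U₂) := by
      have hx1 : (x : GL (Fin n) K) ∈ clo (sval (U₀ ⊓ U₂)) := by rw [← hclo]; exact hx
      exact clo_mono (sval_mono inf_le_right) hx1
    exact conj_clo hx2
  refine ⟨CL U₀, hnormal, ?_, hCL U₀ hU₀F.2⟩
  exact Subgroup.isOpen_mono (le_CL U₀) hU₀F.1

end Master

end Stmt3Aux

end Stmt3AuxSection

/-- Lemma 1.4: open soluble (resp. nilpotent) subgroups of linear groups
yield open normal ones. -/
theorem stmt3 (K : Type*) [Field K] [Infinite K] (n : ℕ) (G : Subgroup (GL (Fin n) K))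
    [TopologicalSpace G] [IsTopologicalGroup G] :
    ((∃ V : Subgroup G, IsOpen (V : Set G) ∧ IsSolvable V) →
      ∃ N : Subgroup G, N.Normal ∧ IsOpen (N : Set G) ∧ IsSolvable N) ∧
    ((∃ V : Subgroup G, IsOpen (V : Set G) ∧ Group.IsNilpotent V) →
      ∃ N : Subgroup G, N.Normal ∧ IsOpen (N : Set G) ∧ Group.IsNilpotent N) := by
  
  constructor
  · intro h
    exact Stmt3Aux.master (fun U => IsSolvable ↥U)
      (fun hUW hW => Stmt3Aux.isSolvable_of_le hUW hW)
      (fun U γ hU => Stmt3Aux.isSolvable_map _ (MulAut.conj γ).injective hU)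
      (fun U hU => Stmt3Aux.CL_isSolvable hU) h
  · intro h
    exact Stmt3Aux.master (fun U => Group.IsNilpotent ↥U)
      (fun hUW hW => Stmt3Aux.isNilpotent_of_le hUW hW)
      (fun U γ hU => Stmt3Aux.isNilpotent_map _ (MulAut.conj γ).injective hU)
      (fun U hU => Stmt3Aux.CL_isNilpotent hU) h
end

section
/- If V is an open subgroup of a topological group G and V is nearly simple, then G is nearly simple. -/
open scoped Manifold
open Matrix

universe u

variable {p : ℕ} [Fact p.Prime] {G : Type*} [Group G] [TopologicalSpace G]

/-- Lemma 2.7: a group with a nearly simple open subgroup is nearly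
simple. -/
theorem stmt12 {G : Type*} [Group G] [TopologicalSpace G] [IsTopologicalGroup G]
    (V : Subgroup G) (hV : IsOpen (V : Set G)) (hns : NearlySimple V) :
    NearlySimple G := by
  intro S hsub hcl
  -- S ∩ V as subgroup of V
  set T : Subgroup V := S.subgroupOf V with hT
  have hTsub : IsSubnormal T := by
    obtain ⟨k, c, h0, hk, hle, hnorm⟩ := hsub
    refine ⟨k, fun i => (c i).subgroupOf V, ?_, ?_, ?_, ?_⟩
    · show (c 0).subgroupOf V = ⊤
      rw [h0]; exact Subgroup.comap_top _
    · show (c k).subgroupOf V = T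
      rw [hk]
    · intro i x hx; exact hle i hx
    · intro i x hx y hy
      exact hnorm i x hx y hy
  have hTcl : IsClosed (T : Set V) := by
    have : (T : Set V) = ((↑) : V → G) ⁻¹' (S : Set G) := rfl
    rw [this]
    exact hcl.preimage continuous_subtype_val
  rcases hns T hTsub hTcl with hopen | hdisc
  · left
    -- image of T in G is open and contained in S
    have h1 : IsOpen (((↑) : V → G) '' (T : Set V)) :=
      hV.isOpenMap_subtype_val _ hopen
    have h2 : (((↑) : V → G) '' (T : Set V)) = (S ⊓ V : Subgroup G) := by
      ext x
      simp only [Set.mem_image, Subgroup.mem_carrier, SetLike.mem_coe, Subgroup.mem_inf]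
      constructor
      · rintro ⟨⟨y, hyV⟩, hyT, rfl⟩; exact ⟨hyT, hyV⟩
      · rintro ⟨hxS, hxV⟩; exact ⟨⟨x, hxV⟩, hxS, rfl⟩
    rw [h2] at h1
    exact Subgroup.isOpen_mono inf_le_left h1
  · right
    -- transfer discreteness
    have h1 : IsOpen ({1} : Set T) := isOpen_discrete _
    -- topology on T induced from G via double coercion
    rw [isOpen_induced_iff] at h1
    obtain ⟨u, hu, hu1⟩ := h1
    rw [isOpen_induced_iff] at hu
    obtain ⟨w, hw, hw1⟩ := hu
    apply discreteTopology_of_isOpen_singleton_one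
    rw [isOpen_induced_iff]
    refine ⟨w ∩ V, hw.inter hV, ?_⟩
    ext ⟨x, hxS⟩
    simp only [Set.mem_preimage, Set.mem_inter_iff, Set.mem_singleton_iff, SetLike.mem_coe]
    constructor
    · rintro ⟨hxw, hxV⟩
      have : (⟨⟨x, hxV⟩, hxS⟩ : T) ∈ ({1} : Set T) := by
        rw [← hu1]
        simp only [Set.mem_preimage]
        rw [← hw1]
        exact hxw
      have := Set.mem_singleton_iff.mp this
      apply Subtype.ext
      exact congrArg (fun z : T => ((z : V) : G)) this
    · intro hx1
      have hx : x = 1 := congrArg Subtype.val hx1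
      subst hx
      have h1u : (1 : ↥V) ∈ u := by
        have h : (1 : T) ∈ Subtype.val ⁻¹' u := by rw [hu1]; rfl
        exact h
      exact ⟨show (1:↥V) ∈ Subtype.val ⁻¹' w by rw [hw1]; exact h1u, one_mem V⟩
end

section
/- Let G be a topological group and D ⊆ G be a discrete normal subgroup. If G is nearly simple, then the quotient topological group G/D is nearly simple. -/
open scoped Manifold
open Matrix

universe u

variable {p : ℕ} [Fact p.Prime] {G : Type*} [Group G] [TopologicalSpace G]

/-- Lemma 2.8: quotients of nearly simple groups by discrete normal
subgroups are nearly simple. -/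
theorem stmt13 {G : Type*} [Group G] [TopologicalSpace G] [IsTopologicalGroup G]
    (D : Subgroup G) [D.Normal] (hD : DiscreteTopology D) (hns : NearlySimple G) :
    NearlySimple (G ⧸ D) := by
  intro S hsub hclosed
  let π : G →* G ⧸ D := QuotientGroup.mk' D
  have hπcont : Continuous (π : G → G ⧸ D) := continuous_quot_mk
  have hπopen : IsOpenMap (π : G → G ⧸ D) := QuotientGroup.isOpenMap_coe
  have hπsurj : Function.Surjective (π : G → G ⧸ D) := QuotientGroup.mk'_surjective D
  set P : Subgroup G := S.comap π with hP
  have hPclosed : IsClosed (P : Set G) := hclosed.preimage hπcont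
  have hPsub : IsSubnormal P := by
    obtain ⟨k, c, h0, hk, hle, hconj⟩ := hsub
    refine ⟨k, fun i => (c i).comap π, ?_, ?_, fun i => Subgroup.comap_mono (hle i),
      fun i x hx y hy => ?_⟩
    · simp [h0, Subgroup.comap_top]
    · simp [hk, hP]
    · have := hconj i (π x) hx (π y) hy
      simpa [Subgroup.mem_comap] using this
  have himg : (S : Set (G ⧸ D)) = π '' (P : Set G) := by
    have : (P : Set G) = (π : G → G ⧸ D) ⁻¹' (S : Set (G ⧸ D)) := rfl
    rw [this, Set.image_preimage_eq _ hπsurj]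
  rcases hns P hPsub hPclosed with hopen | hdisc
  · left
    rw [himg]
    exact hπopen _ hopen
  · right
    rw [discreteTopology_iff_isOpen_singleton]
    rintro ⟨s, hs⟩
    obtain ⟨x, hxs⟩ := hπsurj s
    have hxP : x ∈ P := by
      rw [hP, Subgroup.mem_comap, hxs]; exact hs
    haveI := hdisc
    have hsingle : IsOpen ({⟨x, hxP⟩} : Set P) := isOpen_discrete _
    rw [isOpen_induced_iff] at hsingle
    obtain ⟨V, hVopen, hVeq⟩ := hsingle
    rw [isOpen_induced_iff]
    refine ⟨π '' V, hπopen _ hVopen, ?_⟩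
    ext ⟨t, ht⟩
    simp only [Set.mem_preimage, Set.mem_image, Set.mem_singleton_iff, Subtype.mk_eq_mk]
    constructor
    · rintro ⟨v, hvV, hvt⟩
      -- t ∈ S, so ∃ p ∈ P, π p = t; then v ∈ P
      have hvP : v ∈ P := by
        rw [hP, Subgroup.mem_comap, hvt]; exact ht
      have : (⟨v, hvP⟩ : P) ∈ (Subtype.val ⁻¹' V : Set P) := hvV
      rw [hVeq] at this
      have hvx : v = x := congrArg Subtype.val this
      rw [← hvt, hvx, hxs]
    · rintro rfl
      have : (⟨x, hxP⟩ : P) ∈ ({⟨x, hxP⟩} : Set P) := rfl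
      rw [← hVeq] at this
      exact ⟨x, this, hxs⟩
end

section
/- If a p-adic Lie group G is extraordinary, then the radical R(S) is discrete for every open subnormal subgroup S of G. -/
open scoped Manifold
open Matrix

universe u

variable {p : ℕ} [Fact p.Prime] {G : Type*} [Group G] [TopologicalSpace G]

/-! ### Auxiliary material for Statement 17 -/

section Stmt17Aux

open Topology Metric Set Filter

/-- A continuous injection into a discrete space forces discreteness. -/
private lemma discrete_of_cont_inj {X Y : Type*} [TopologicalSpace X] [TopologicalSpace Y]
    [DiscreteTopology Y] {f : X → Y} (hc : Continuous f) (hi : Function.Injective f) :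
    DiscreteTopology X := by
  rw [discreteTopology_iff_isOpen_singleton]
  intro x
  have hx : ({x} : Set X) = f ⁻¹' {f x} := by
    ext z; simp [hi.eq_iff]
  rw [hx]
  exact (isOpen_discrete _).preimage hc

private lemma discrete_of_sep {X : Type*} [TopologicalSpace X] {f : X → G}
    (hc : Continuous f)
    (hsep : ∀ x : X, ∃ U : Set G, IsOpen U ∧ f x ∈ U ∧ ∀ y : X, f y ∈ U → y = x) :
    DiscreteTopology X := by
  rw [discreteTopology_iff_isOpen_singleton]
  intro x
  obtain ⟨U, hUo, hxU, hU⟩ := hsep x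
  have hx : ({x} : Set X) = f ⁻¹' U := by
    ext z
    constructor
    · rintro rfl
      exact hxU
    · intro hz
      exact hU z hz
  rw [hx]
  exact hUo.preimage hc

private lemma isSubnormal_top : IsSubnormal (⊤ : Subgroup G) :=
  ⟨0, fun _ => ⊤, rfl, rfl, fun _ => le_rfl, fun _ _ _ y hy => by simpa using hy⟩

private lemma isSubnormal_of_le_of_conj {S T : Subgroup G} (hS : IsSubnormal S)
    (hle : T ≤ S) (hconj : ∀ s ∈ S, ∀ t ∈ T, s * t * s⁻¹ ∈ T) : IsSubnormal T := by
  obtain ⟨k, c, hc0, hck, hmono, hnorm⟩ := hS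
  refine ⟨k + 1, fun j => if j ≤ k then c j else T, ?_, ?_, ?_, ?_⟩
  · simp [Nat.zero_le k, hc0]
  · simp
  · intro i
    by_cases h1 : i + 1 ≤ k
    · have h2 : i ≤ k := le_of_lt (Nat.lt_of_succ_le h1)
      simpa [h1, h2] using hmono i
    · by_cases h2 : i ≤ k
      · have hik : i = k := le_antisymm h2 (by omega)
        have : T ≤ c i := by rw [hik, hck]; exact hle
        simpa [h1, h2] using this
      · simp [h1, h2]
  · intro i x hx y hy
    dsimp only at hx hy ⊢
    by_cases h1 : i + 1 ≤ k
    · have h2 : i ≤ k := le_of_lt (Nat.lt_of_succ_le h1)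
      rw [if_pos h2] at hx
      rw [if_pos h1] at hy ⊢
      exact hnorm i x hx y hy
    · rw [if_neg h1] at hy ⊢
      by_cases h2 : i ≤ k
      · have hik : i = k := le_antisymm h2 (by omega)
        rw [if_pos h2, hik, hck] at hx
        exact hconj x hx y hy
      · rw [if_neg h2] at hx
        exact hconj x (hle hx) y hy

private lemma isSolvable_of_mulEquiv {A B : Type*} [Group A] [Group B] (e : A ≃* B)
    [Group.IsSolvable A] : Group.IsSolvable B :=
  solvable_of_surjective (f := e.toMonoidHom)
    (fun b => ⟨e.symm b, by simp⟩)

private lemma isSolvable_sup' {H : Type*} [Group H] (N₁ N₂ : Subgroup H) [hn : N₁.Normal]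
    [h1 : Group.IsSolvable N₁] [h2 : Group.IsSolvable N₂] : Group.IsSolvable ↥(N₁ ⊔ N₂) := by
  rw [sup_comm]
  have e := QuotientGroup.quotientInfEquivProdNormalQuotient N₂ N₁
  haveI : Group.IsSolvable (↥N₂ ⧸ N₁.subgroupOf N₂) :=
    solvable_of_surjective (QuotientGroup.mk'_surjective (N₁.subgroupOf N₂))
  haveI : Group.IsSolvable (↥(N₂ ⊔ N₁) ⧸ N₁.subgroupOf (N₂ ⊔ N₁)) := isSolvable_of_mulEquiv e
  haveI : Group.IsSolvable ↥(N₁.subgroupOf (N₂ ⊔ N₁)) :=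
    isSolvable_of_mulEquiv (Subgroup.subgroupOfEquivOfLe (le_sup_right (a := N₂))).symm
  exact solvable_of_ker_le_range (N₁.subgroupOf (N₂ ⊔ N₁)).subtype
    (QuotientGroup.mk' (N₁.subgroupOf (N₂ ⊔ N₁)))
    (by rw [QuotientGroup.ker_mk', Subgroup.range_subtype])

variable [IsTopologicalGroup G]

open scoped commutatorElement in
/-- Core lemma: in a nearly simple group in which every open subnormal subgroup has
non-discrete commutator subgroup and `{1}` is closed, the closure of every solvable
subgroup that is normalized by a closed subnormal subgroup containing it is discrete. -/
private lemma closure_discrete_of_solvable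
    (hns : NearlySimple G)
    (hcomm : ∀ S : Subgroup G, IsSubnormal S → IsOpen (S : Set G) →
      ¬ DiscreteTopology (commutator S))
    (hone : IsClosed ({1} : Set G))
    {S N : Subgroup G} (hS : IsSubnormal S) (hSc : IsClosed (S : Set G))
    (hNle : N ≤ S) (hconj : ∀ s ∈ S, ∀ t ∈ N, s * t * s⁻¹ ∈ N)
    (hsol : IsSolvable N) :
    DiscreteTopology N.topologicalClosure := by
  classical
  -- the derived series of `N`, as subgroups of `G`
  set D : ℕ → Subgroup G := fun n => Subgroup.map N.subtype (derivedSeries ↥N n) with hD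
  have hD0 : D 0 = N := by
    rw [hD]
    simp only [derivedSeries_zero]
    rw [← MonoidHom.range_eq_map, Subgroup.range_subtype]
  have hDsucc : ∀ n, D (n + 1) = ⁅D n, D n⁆ := by
    intro n
    rw [hD]
    simp only [derivedSeries_succ, Subgroup.map_commutator]
  have hDle : ∀ n, D n ≤ N := fun n => Subgroup.map_subtype_le _
  -- conjugation stability of the derived series
  have hDconj : ∀ n, ∀ s ∈ S, ∀ t ∈ D n, s * t * s⁻¹ ∈ D n := by
    intro n
    induction n with
    | zero => intro s hs t ht; rw [hD0] at *; exact hconj s hs t ht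
    | succ n ih =>
      intro s hs t ht
      rw [hDsucc] at ht ⊢
      have hmaple : Subgroup.map (MulAut.conj s).toMonoidHom ⁅D n, D n⁆ ≤ ⁅D n, D n⁆ := by
        rw [Subgroup.map_commutator]
        have hle' : Subgroup.map (MulAut.conj s).toMonoidHom (D n) ≤ D n := by
          intro y hy
          obtain ⟨z, hz, rfl⟩ := hy
          simpa [MulAut.conj_apply] using ih s hs z hz
        exact Subgroup.commutator_mono hle' hle'
      have : (MulAut.conj s).toMonoidHom t ∈ Subgroup.map (MulAut.conj s).toMonoidHom ⁅D n, D n⁆ :=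
        Subgroup.mem_map_of_mem _ ht
      simpa [MulAut.conj_apply] using hmaple this
  -- the closures of the derived series
  set T : ℕ → Subgroup G := fun n => (D n).topologicalClosure with hT
  have hTc : ∀ n, IsClosed ((T n : Set G)) := fun n => Subgroup.isClosed_topologicalClosure _
  have hTle : ∀ n, T n ≤ S := fun n =>
    Subgroup.topologicalClosure_minimal _ ((hDle n).trans hNle) hSc
  have hTconj : ∀ n, ∀ s ∈ S, ∀ t ∈ T n, s * t * s⁻¹ ∈ T n := by
    intro n s hs t ht
    have hcont : Continuous fun y : G => s * y * s⁻¹ :=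
      ((continuous_const.mul continuous_id).mul continuous_const)
    have ht' : t ∈ closure ((D n : Set G)) := ht
    have := map_mem_closure hcont ht' (fun z hz => hDconj n s hs z hz)
    exact this
  have hTsub : ∀ n, IsSubnormal (T n) := fun n =>
    isSubnormal_of_le_of_conj hS (hTle n) (hTconj n)
  -- commutators drop one level down
  have hTcomm : ∀ n, ⁅T n, T n⁆ ≤ T (n + 1) := by
    intro n
    rw [Subgroup.commutator_le]
    intro g1 h1 g2 h2
    have h1' : g1 ∈ closure ((D n : Set G)) := h1
    have h2' : g2 ∈ closure ((D n : Set G)) := h2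
    have hcont : Continuous (Function.uncurry fun a b : G => ⁅a, b⁆) := by
      simp only [Function.uncurry, commutatorElement_def]
      fun_prop
    have := map_mem_closure₂ hcont h1' h2'
      (fun a ha b hb => by
        have : ⁅a, b⁆ ∈ ⁅D n, D n⁆ := Subgroup.commutator_mem_commutator ha hb
        rw [← hDsucc n] at this
        exact this)
    exact this
  -- if `T 0` is open then all `T n` are open, which is absurd
  have hopenstep : ∀ n, IsOpen ((T n : Set G)) → IsOpen ((T (n + 1) : Set G)) := by
    intro n hopen
    have hnd := hcomm (T n) (hTsub n) hopen
    rcases hns (T (n + 1)) (hTsub (n + 1)) (hTc (n + 1)) with ho | hd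
    · exact ho
    · exfalso
      apply hnd
      -- the commutator of `T n` embeds into `T (n+1)`
      have hmaple : Subgroup.map (T n).subtype (commutator ↥(T n)) ≤ T (n + 1) := by
        rw [commutator_def, Subgroup.map_commutator]
        have : Subgroup.map (T n).subtype ⊤ = T n := by
          rw [← MonoidHom.range_eq_map, Subgroup.range_subtype]
        rw [this]
        exact hTcomm n
      refine discrete_of_cont_inj (Y := ↥(T (n + 1)))
        (f := fun x : ↥(commutator ↥(T n)) => (⟨(x : ↥(T n)), ?_⟩ : ↥(T (n + 1)))) ?_ ?_
      · exact hmaple (Subgroup.mem_map_of_mem _ x.2)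
      · exact Continuous.subtype_mk (continuous_subtype_val.comp continuous_subtype_val) _
      · intro a b hab
        simp only [Subtype.mk.injEq] at hab
        exact Subtype.ext (Subtype.ext hab)
  have hopenall : IsOpen ((T 0 : Set G)) → ∀ n, IsOpen ((T n : Set G)) := by
    intro h0 n
    induction n with
    | zero => exact h0
    | succ n ih => exact hopenstep n ih
  -- conclude
  have hT0 : T 0 = N.topologicalClosure := by rw [hT]; simp [hD0]
  rcases hns (T 0) (hTsub 0) (hTc 0) with ho | hd
  · exfalso
    obtain ⟨n, hn⟩ := (isSolvable_def ↥N).mp hsol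
    have hDn : D n = ⊥ := by simp only [hD, hn]; exact Subgroup.map_bot _
    have hTn : ((T n : Set G)) = {1} := by
      rw [hT]
      simp only [Subgroup.topologicalClosure_coe, hDn, Subgroup.coe_bot]
      exact hone.closure_eq
    have h1open : IsOpen ({1} : Set G) := by
      rw [← hTn]
      exact hopenall ho n
    haveI hdg : DiscreteTopology G := discreteTopology_of_isOpen_singleton_one h1open
    exact hcomm ⊤ isSubnormal_top (by simp) inferInstance
  · rw [← hT0]
    exact hd

end Stmt17Aux

section Stmt17Analytic

open Topology Metric Set Filter

private lemma ultra_pi {d : ℕ} : IsUltrametricDist (Fin d → ℚ_[p]) := by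
  constructor
  intro x y z
  rw [dist_pi_le_iff (le_max_iff.2 (Or.inl dist_nonneg))]
  intro i
  exact (IsUltrametricDist.dist_triangle_max (x i) (y i) (z i)).trans
    (max_le_max (dist_le_pi_dist x y i) (dist_le_pi_dist y z i))

private lemma isClosed_one' {E : Type*} [NormedAddCommGroup E] [ChartedSpace E G]
    [IsTopologicalGroup G] : IsClosed ({1} : Set G) := by
  set φ : OpenPartialHomeomorph G E := chartAt E (1 : G) with hφ
  have h1s : (1 : G) ∈ φ.source := mem_chart_source E 1
  have haux : ∀ w, w ∈ closure ({(1 : G)}) → w ∈ φ.source → w = 1 := by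
    intro w hw hws
    by_contra hne
    have hφne : φ w ≠ φ 1 := fun hEq => hne (φ.injOn hws h1s hEq)
    have hr0 : 0 < dist (φ w) (φ 1) := dist_pos.mpr hφne
    set Uw : Set G := φ.source ∩ φ ⁻¹' (Metric.ball (φ w) (dist (φ w) (φ 1))) with hUw
    have hUwopen : IsOpen Uw := φ.isOpen_inter_preimage Metric.isOpen_ball
    have hwUw : w ∈ Uw := ⟨hws, by
      simp only [Set.mem_preimage, Metric.mem_ball, dist_self]
      exact hr0⟩
    have h1Uw : (1 : G) ∉ Uw := by
      intro h1'
      have h2 := h1'.2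
      simp only [Set.mem_preimage, Metric.mem_ball] at h2
      rw [dist_comm] at h2
      exact lt_irrefl _ h2
    rcases mem_closure_iff.mp hw Uw hUwopen hwUw with ⟨y, hyU, hy1⟩
    rw [Set.mem_singleton_iff] at hy1
    subst hy1
    exact h1Uw hyU
  apply isClosed_of_closure_subset
  intro z hz
  have hzinv : z⁻¹ ∈ closure ({(1 : G)}) := by
    have hci : Continuous fun a : G => a⁻¹ := continuous_inv
    have h3 := map_mem_closure hci hz (fun a ha => by
      rw [Set.mem_singleton_iff] at ha ⊢
      rw [ha, inv_one])
    exact h3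
  have hzs : z⁻¹ ∈ φ.source := by
    set U : Set G := (fun w => z * w) '' φ.source with hU
    have hUopen : IsOpen U := isOpenMap_mul_left z _ φ.open_source
    have hzU : z ∈ U := ⟨1, h1s, mul_one z⟩
    rcases mem_closure_iff.mp hz U hUopen hzU with ⟨y, hyU, hy1⟩
    rw [Set.mem_singleton_iff] at hy1
    subst hy1
    obtain ⟨s, hs, hzs1⟩ := hyU
    have hsz : s = z⁻¹ := by
      have := inv_eq_of_mul_eq_one_right hzs1
      rw [← this]
    rwa [← hsz]
  have hz1 := haux z⁻¹ hzinv hzs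
  rw [Set.mem_singleton_iff, ← inv_inv z, hz1, inv_one]

set_option maxHeartbeats 2000000 in
/-- Every `p`-adic Lie group contains a compact open subgroup without non-trivial elements
of prime order. -/
private lemma exists_torsionfree_compact_open {E : Type*} [NormedAddCommGroup E]
    [NormedSpace ℚ_[p] E] [IsUltrametricDist E] [ProperSpace E] [ChartedSpace E G]
    [IsTopologicalGroup G] [LieGroup (modelWithCornersSelf ℚ_[p] E) (⊤ : ℕ∞) G] :
    ∃ K : Subgroup G, IsOpen (K : Set G) ∧ IsCompact (K : Set G) ∧
      ∀ g ∈ K, ∀ q : ℕ, q.Prime → g ^ q = 1 → g = 1 := by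
  set I : ModelWithCorners ℚ_[p] E E := modelWithCornersSelf ℚ_[p] E with hI
  set φ : OpenPartialHomeomorph G E := chartAt E (1 : G) with hφ
  set c : E := φ 1 with hc
  have h1s : (1 : G) ∈ φ.source := mem_chart_source E 1
  have hct : c ∈ φ.target := φ.map_source h1s
  -- the differential of multiplication at (1,1) is addition
  have hsm : MDifferentiableAt (I.prod I) I (fun z : G × G => z.1 * z.2) (1, 1) :=
    (contMDiff_mul I ((⊤ : ℕ∞) : WithTop ℕ∞) (G := G)).mdifferentiableAt (by simp)
  have hA : ∀ v : E × E,
      mfderiv (I.prod I) I (fun z : G × G => z.1 * z.2) ((1 : G), (1 : G)) v = v.1 + v.2 := by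
    intro v
    erw [mfderiv_prod_eq_add_apply hsm]
    have e1 : (fun z : G => z * 1) = id := funext fun z => mul_one z
    have e2 : (fun z : G => 1 * z) = id := funext fun z => one_mul z
    rw [e1, e2, mfderiv_id]
    rfl
  -- pass to chart coordinates
  set A : (E × E) →L[ℚ_[p]] E :=
    mfderiv (I.prod I) I (fun z : G × G => z.1 * z.2) ((1 : G), (1 : G)) with hAdef
  have hA' : ∀ v : E × E, A v = v.1 + v.2 := hA
  have hmf : HasMFDerivAt (I.prod I) I (fun z : G × G => z.1 * z.2) (1, 1) A :=
    hsm.hasMFDerivAt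
  have hfd0 := hmf.2
  have hrange : Set.range (I.prod I) = univ := ModelWithCorners.range_eq_univ _
  rw [hrange] at hfd0
  replace hfd0 := hasFDerivWithinAt_univ.mp hfd0
  have hpt : (extChartAt (I.prod I) ((1 : G), (1 : G))) ((1 : G), (1 : G)) = (c, c) := by
    simp only [extChartAt_prod, PartialEquiv.prod_coe, extChartAt_coe,
      modelWithCornersSelf_coe, Function.comp_apply, id_eq]
    rfl
  rw [hpt] at hfd0
  set F : E × E → E := fun z => φ (φ.symm z.1 * φ.symm z.2) with hF
  have hev : F =ᶠ[𝓝 ((c : E), (c : E))]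
      writtenInExtChartAt (I.prod I) I ((1 : G), (1 : G)) (fun z : G × G => z.1 * z.2) := by
    have hmem : φ.target ×ˢ φ.target ∈ 𝓝 ((c : E), (c : E)) :=
      (φ.open_target.prod φ.open_target).mem_nhds ⟨hct, hct⟩
    filter_upwards [hmem] with z hz
    obtain ⟨hz1, hz2⟩ := hz
    simp only [hF, writtenInExtChartAt, Function.comp_apply, extChartAt_prod,
      PartialEquiv.prod_symm, PartialEquiv.prod_coe_symm, extChartAt_coe,
      modelWithCornersSelf_coe, id_eq, one_mul]
    rfl
  have hFder : HasFDerivAt F A (c, c) := hfd0.congr_of_eventuallyEq hev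
  have hFcc : F (c, c) = c := by
    have h11 : φ.symm c = 1 := φ.left_inv h1s
    simp only [hF, h11, one_mul]
    exact hc.symm
  -- quantitative estimate
  have hp1 : (1 : ℝ) < (p : ℝ) := by
    have := (Fact.out : p.Prime).one_lt
    exact_mod_cast this
  set ε : ℝ := ((p : ℝ) * 2)⁻¹ with hε
  have hεpos : 0 < ε := by rw [hε]; positivity
  have hεlt : ε < (p : ℝ)⁻¹ := by
    rw [hε, mul_inv]
    have hpinv : 0 < (p : ℝ)⁻¹ := by positivity
    nlinarith
  have hεle1 : ε ≤ 1 := by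
    rw [hε]
    rw [inv_le_one_iff₀]
    right
    nlinarith
  have hlo := hasFDerivAt_iff_isLittleO_nhds_zero.mp hFder
  obtain ⟨δ, hδpos, hδ⟩ := Metric.eventually_nhds_iff.mp (Asymptotics.isLittleO_iff.mp hlo hεpos)
  have hEst : ∀ u v : E, ‖u‖ < δ → ‖v‖ < δ →
      ‖φ (φ.symm (c + u) * φ.symm (c + v)) - c - (u + v)‖ ≤ ε * max ‖u‖ ‖v‖ := by
    intro u v hu hv
    have hk : dist ((u, v) : E × E) 0 < δ := by
      rw [dist_zero_right, Prod.norm_def]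
      exact max_lt hu hv
    have h1 := hδ hk
    rw [hFcc] at h1
    have h2 : ((c, c) : E × E) + (u, v) = (c + u, c + v) := rfl
    rw [h2] at h1
    rw [hA' (u, v)] at h1
    have h4 : ‖((u, v) : E × E)‖ = max ‖u‖ ‖v‖ := Prod.norm_def _
    rw [h4] at h1
    exact h1
  -- a compact open neighbourhood inside the chart
  obtain ⟨r, hr0, hrsub⟩ : ∃ r > 0, ball c r ⊆ φ.target ∩ ball c δ := by
    have hop : IsOpen (φ.target ∩ ball c δ) := φ.open_target.inter isOpen_ball
    exact Metric.isOpen_iff.mp hop c ⟨hct, mem_ball_self hδpos⟩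
  set ρ : ℝ := r / 2 with hρ
  have hρpos : 0 < ρ := by rw [hρ]; positivity
  have hcb : closedBall c ρ ⊆ ball c r := closedBall_subset_ball (by rw [hρ]; linarith)
  set V : Set G := φ.source ∩ φ ⁻¹' (closedBall c ρ) with hV
  have hVopen : IsOpen V :=
    φ.isOpen_inter_preimage (IsUltrametricDist.isOpen_closedBall c (ne_of_gt hρpos))
  have h1V : (1 : G) ∈ V := ⟨h1s, by
    simp only [Set.mem_preimage, Metric.mem_closedBall, ← hc, dist_self]
    exact le_of_lt hρpos⟩
  have hVsource : V ⊆ φ.source := inter_subset_left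
  have hVcomp : IsCompact V := by
    have himg : V = φ.symm '' closedBall c ρ := by
      apply Subset.antisymm
      · intro a ha
        exact ⟨φ a, ha.2, φ.left_inv ha.1⟩
      · rintro _ ⟨y, hy, rfl⟩
        have hyt : y ∈ φ.target := (hrsub (hcb hy)).1
        refine ⟨φ.map_target hyt, ?_⟩
        simp only [Set.mem_preimage]
        rw [φ.right_inv hyt]
        exact hy
    rw [himg]
    exact (isCompact_closedBall c ρ).image_of_continuousOn
      (φ.symm.continuousOn.mono (fun y hy => (hrsub (hcb hy)).1))
  -- build the subgroup
  obtain ⟨W, hWnhds, hWV⟩ := compact_open_separated_mul_left hVcomp hVopen Subset.rfl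
  obtain ⟨O, hOW, hOopen, h1O⟩ := mem_nhds_iff.mp hWnhds
  set Ws : Set G := O ∩ (fun x : G => x⁻¹) ⁻¹' O with hWs
  have hWsopen : IsOpen Ws := hOopen.inter (hOopen.preimage continuous_inv)
  have h1Ws : (1 : G) ∈ Ws := ⟨h1O, by
    simp only [Set.mem_preimage, inv_one]
    exact h1O⟩
  set K := Subgroup.closure Ws with hK
  have hM : ∀ g ∈ K, ∀ v ∈ V, g * v ∈ V ∧ g⁻¹ * v ∈ V := by
    intro g hg
    induction hg using Subgroup.closure_induction with
    | mem w hw =>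
      intro v hv
      constructor
      · exact hWV (Set.mul_mem_mul (hOW hw.1) hv)
      · exact hWV (Set.mul_mem_mul (hOW hw.2) hv)
    | one =>
      intro v hv
      simpa using hv
    | mul a b ha hb iha ihb =>
      intro v hv
      constructor
      · rw [mul_assoc]
        exact (iha _ ((ihb v hv).1)).1
      · rw [_root_.mul_inv_rev, mul_assoc]
        exact (ihb _ ((iha v hv).2)).2
    | inv a ha iha =>
      intro v hv
      constructor
      · exact (iha v hv).2
      · rw [inv_inv]
        exact (iha v hv).1
  have hKV : (K : Set G) ⊆ V := by
    intro g hg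
    have := (hM g hg 1 h1V).1
    simpa using this
  have hKopen : IsOpen (K : Set G) :=
    Subgroup.isOpen_of_mem_nhds K
      (mem_nhds_iff.mpr ⟨Ws, fun x hx => Subgroup.subset_closure hx, hWsopen, h1Ws⟩)
  have hKcomp : IsCompact (K : Set G) :=
    hVcomp.of_isClosed_subset (Subgroup.isClosed_of_isOpen K hKopen) hKV
  refine ⟨K, hKopen, hKcomp, ?_⟩
  -- torsion-freeness inside K
  intro g hg q hq hgq
  by_contra hgne
  have hgs : g ∈ φ.source := hVsource (hKV hg)
  set x : E := φ g - c with hx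
  have hxne : x ≠ 0 := by
    rw [hx, sub_ne_zero]
    intro hEq
    exact hgne (φ.injOn hgs h1s (by rw [hEq, hc]))
  have hmemball : ∀ m : ℕ, g ^ m ∈ φ.source ∧ ‖φ (g ^ m) - c‖ < δ ∧ ‖φ (g ^ m) - c‖ ≤ ρ := by
    intro m
    have hm : g ^ m ∈ K := pow_mem hg m
    have hmV := hKV hm
    have hcbm : φ (g ^ m) ∈ closedBall c ρ := hmV.2
    refine ⟨hVsource hmV, ?_, ?_⟩
    · have : φ (g ^ m) ∈ ball c δ := (hrsub (hcb hcbm)).2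
      rwa [mem_ball, dist_eq_norm] at this
    · rwa [Metric.mem_closedBall, dist_eq_norm] at hcbm
  have hxδ : ‖x‖ < δ := by
    rw [hx]
    have := (hmemball 1).2.1
    rwa [pow_one] at this
  have key : ∀ j : ℕ, ‖φ (g ^ (j + 1)) - c - (((j + 1 : ℕ) : ℚ_[p])) • x‖ ≤ ε * ‖x‖ := by
    intro j
    induction j with
    | zero =>
      have : φ (g ^ 1) - c - (((1 : ℕ) : ℚ_[p])) • x = 0 := by
        rw [pow_one, Nat.cast_one, one_smul, hx]
        abel
      rw [this, norm_zero]
      positivity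
    | succ j ih =>
      set u : E := φ (g ^ (j + 1)) - c with hu
      have hule : ‖u‖ ≤ ‖x‖ := by
        have hdecomp : u = (u - (((j + 1 : ℕ) : ℚ_[p])) • x) + (((j + 1 : ℕ) : ℚ_[p])) • x := by
          abel
        rw [hdecomp]
        refine (IsUltrametricDist.norm_add_le_max _ _).trans (max_le ?_ ?_)
        · refine le_trans ih ?_
          nlinarith [norm_nonneg x]
        · rw [norm_smul]
          have hnle : ‖(((j + 1 : ℕ) : ℚ_[p]))‖ ≤ 1 := by
            have h5 := Padic.norm_int_le_one (p := p) ((j + 1 : ℕ) : ℤ)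
            have h6 : (((j + 1 : ℕ) : ℤ) : ℚ_[p]) = (((j + 1 : ℕ) : ℚ_[p])) := by push_cast; ring
            rwa [h6] at h5
          nlinarith [norm_nonneg x]
      have hEq1 : c + u = φ (g ^ (j + 1)) := by rw [hu]; abel
      have hEq2 : c + x = φ g := by rw [hx]; abel
      have hest := hEst u x (lt_of_le_of_lt hule hxδ) hxδ
      rw [hEq1, hEq2, φ.left_inv (hmemball (j + 1)).1, φ.left_inv hgs] at hest
      have hpow : g ^ (j + 1) * g = g ^ (j + 1 + 1) := (pow_succ g (j + 1)).symm
      rw [hpow] at hest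
      have hmax : ε * max ‖u‖ ‖x‖ ≤ ε * ‖x‖ :=
        mul_le_mul_of_nonneg_left (max_le hule le_rfl) (le_of_lt hεpos)
      have hsplit : φ (g ^ (j + 1 + 1)) - c - (((j + 1 + 1 : ℕ) : ℚ_[p])) • x
          = (φ (g ^ (j + 1 + 1)) - c - (u + x)) + (u - (((j + 1 : ℕ) : ℚ_[p])) • x) := by
        have hc2 : (((j + 1 + 1 : ℕ) : ℚ_[p])) • x = (((j + 1 : ℕ) : ℚ_[p])) • x + x := by
          rw [show (((j + 1 + 1 : ℕ) : ℚ_[p])) = (((j + 1 : ℕ) : ℚ_[p])) + 1 by push_cast; ring,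
            add_smul, one_smul]
        rw [hc2]
        abel
      rw [hsplit]
      exact (IsUltrametricDist.norm_add_le_max _ _).trans (max_le (hest.trans hmax) ih)
  obtain ⟨j, hj⟩ : ∃ j : ℕ, j + 1 = q := ⟨q - 1, Nat.succ_pred_eq_of_pos hq.pos⟩
  have hkey := key j
  rw [hj, hgq] at hkey
  have hφ1 : φ (1 : G) - c = 0 := by rw [← hc]; abel
  have hkey2 : ‖((q : ℚ_[p])) • x‖ ≤ ε * ‖x‖ := by
    have h7 : φ (1 : G) - c - ((q : ℚ_[p])) • x = -(((q : ℚ_[p])) • x) := by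
      rw [hφ1]; abel
    rw [h7, norm_neg] at hkey
    exact hkey
  rw [norm_smul] at hkey2
  have hxpos : 0 < ‖x‖ := norm_pos_iff.mpr hxne
  have hqnorm_le : ‖((q : ℚ_[p]))‖ ≤ ε := le_of_mul_le_mul_right hkey2 hxpos
  have hqnorm_ge : (p : ℝ)⁻¹ ≤ ‖((q : ℚ_[p]))‖ := by
    by_cases hqp : q = p
    · rw [hqp, Padic.norm_p]
    · have hnd : ¬ ((p : ℤ) ∣ (q : ℤ)) := by
        intro hdvd
        have hpq : p ∣ q := Int.natCast_dvd_natCast.mp hdvd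
        exact hqp (((Nat.prime_dvd_prime_iff_eq Fact.out hq).mp hpq)).symm
      have hnl : ¬ (‖(((q : ℤ)) : ℚ_[p])‖ < 1) := fun hlt =>
        hnd (Padic.norm_intCast_lt_one_iff.mp hlt)
      have h8 : (1 : ℝ) ≤ ‖(((q : ℤ)) : ℚ_[p])‖ := not_lt.mp hnl
      have h9 : (((q : ℤ)) : ℚ_[p]) = ((q : ℚ_[p])) := by push_cast; ring
      rw [h9] at h8
      have h10 : (p : ℝ)⁻¹ ≤ 1 := by
        rw [inv_le_one_iff₀]
        right
        linarith
      linarith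
  linarith

end Stmt17Analytic

/-- Remark 3.3: in an extraordinary p-adic Lie group, the radical of every
open subnormal subgroup is discrete. -/
theorem stmt17 (h : PadicLieGroup p G) (hex : h.Extraordinary)
    (S : Subgroup G) (hsub : IsSubnormal S) (hopen : IsOpen (S : Set G)) :
    DiscreteTopology (radicalSet S) := by
  letI := h.charted
  haveI : LieGroup 𝓘(ℚ_[p], Fin h.dim → ℚ_[p]) (⊤ : ℕ∞) G := h.lie
  haveI : ContinuousMul G := ⟨(contMDiff_mul 𝓘(ℚ_[p], Fin h.dim → ℚ_[p]) ((⊤ : ℕ∞) : WithTop ℕ∞) (G := G)).continuous⟩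
  haveI : ContinuousInv G := ⟨(contMDiff_inv 𝓘(ℚ_[p], Fin h.dim → ℚ_[p]) ((⊤ : ℕ∞) : WithTop ℕ∞) (G := G)).continuous⟩
  haveI : IsTopologicalGroup G := ⟨⟩
  haveI : IsUltrametricDist (Fin h.dim → ℚ_[p]) := ultra_pi
  obtain ⟨hns, hAd, hcomm⟩ := hex
  have hone : IsClosed ({1} : Set G) := isClosed_one' (E := Fin h.dim → ℚ_[p])
  obtain ⟨K, hKopen, hKcomp, hKtf⟩ :=
    exists_torsionfree_compact_open (p := p) (G := G) (E := Fin h.dim → ℚ_[p])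
  have hSc : IsClosed (S : Set G) := Subgroup.isClosed_of_isOpen S hopen
  apply discrete_of_sep (f := fun r : ↥(radicalSet S) => ((r.1 : ↥S) : G))
    (continuous_subtype_val.comp continuous_subtype_val)
  intro r
  refine ⟨(fun w => ((r.1 : ↥S) : G) * w) '' (K : Set G),
    isOpenMap_mul_left _ _ hKopen, ⟨1, K.one_mem, mul_one _⟩, ?_⟩
  intro y hy
  obtain ⟨kk, hkk, hkeq⟩ := hy
  obtain ⟨N₁, hN₁, hrN₁⟩ := Set.mem_iUnion₂.mp r.2
  obtain ⟨N₂, hN₂, hyN₂⟩ := Set.mem_iUnion₂.mp y.2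
  haveI := hN₁.1
  haveI := hN₂.1
  haveI : Group.IsSolvable ↥N₁ := hN₁.2
  haveI : Group.IsSolvable ↥N₂ := hN₂.2
  set N₃ : Subgroup ↥S := N₁ ⊔ N₂ with hN₃
  haveI hN₃n : N₃.Normal := Subgroup.sup_normal N₁ N₂
  haveI hN₃sol : Group.IsSolvable ↥N₃ := isSolvable_sup' N₁ N₂
  set NG : Subgroup G := N₃.map S.subtype with hNG
  have hNGle : NG ≤ S := Subgroup.map_subtype_le N₃
  haveI hNGsol : Group.IsSolvable ↥NG :=
    isSolvable_of_mulEquiv (N₃.equivMapOfInjective S.subtype S.subtype_injective)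
  have hNGconj : ∀ s ∈ S, ∀ t ∈ NG, s * t * s⁻¹ ∈ NG := by
    intro s hs t ht
    obtain ⟨u, hu, rfl⟩ := ht
    refine ⟨⟨s, hs⟩ * u * ⟨s, hs⟩⁻¹, hN₃n.conj_mem u hu ⟨s, hs⟩, rfl⟩
  have hdisc : DiscreteTopology NG.topologicalClosure :=
    closure_discrete_of_solvable hns hcomm hone hsub hSc hNGle hNGconj hNGsol
  set g0 : G := ((r.1 : ↥S) : G)⁻¹ * ((y.1 : ↥S) : G) with hg0
  have hg0K : g0 ∈ K := by
    have hsimp : ((r.1 : ↥S) : G)⁻¹ * (((r.1 : ↥S) : G) * kk) = kk := by group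
    rw [hg0, ← hkeq, hsimp]
    exact hkk
  have hg0NG : g0 ∈ NG := by
    have hr' : ((r.1 : ↥S) : G) ∈ NG := ⟨r.1, Subgroup.mem_sup_left hrN₁, rfl⟩
    have hy' : ((y.1 : ↥S) : G) ∈ NG := ⟨y.1, Subgroup.mem_sup_right hyN₂, rfl⟩
    exact mul_mem (inv_mem hr') hy'
  set Hf : Subgroup G := NG.topologicalClosure ⊓ K with hHf
  have hg0C : g0 ∈ Hf := ⟨NG.le_topologicalClosure hg0NG, hg0K⟩
  have hfin : ((Hf : Subgroup G) : Set G).Finite := by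
    have hsubset : ((Hf : Subgroup G) : Set G) ⊆ (NG.topologicalClosure : Set G) := by
      rw [hHf, Subgroup.coe_inf]
      exact Set.inter_subset_left
    have hdisc' : DiscreteTopology ((Hf : Subgroup G) : Set G) :=
      DiscreteTopology.of_subset hdisc hsubset
    have hcompact : IsCompact ((Hf : Subgroup G) : Set G) := by
      rw [hHf, Subgroup.coe_inf]
      exact hKcomp.inter_left NG.isClosed_topologicalClosure
    exact hcompact.finite (isDiscrete_iff_discreteTopology.mpr hdisc')
  haveI : Finite ↥Hf := hfin.to_subtype
  by_contra hne
  have hg0ne : g0 ≠ 1 := by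
    intro h1
    apply hne
    have hyr : ((y.1 : ↥S) : G) = ((r.1 : ↥S) : G) := by
      rw [hg0] at h1
      have := inv_mul_eq_one.mp h1
      rw [this]
    exact Subtype.ext (Subtype.ext hyr)
  have horder : orderOf g0 = orderOf (⟨g0, hg0C⟩ : ↥Hf) :=
    orderOf_injective Hf.subtype Hf.subtype_injective ⟨g0, hg0C⟩
  have hn0 : orderOf g0 ≠ 0 := by
    rw [horder]
    exact (orderOf_pos _).ne'
  have hn1 : orderOf g0 ≠ 1 := by
    rw [Ne, orderOf_eq_one_iff]
    exact hg0ne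
  have hq : (orderOf g0).minFac.Prime := Nat.minFac_prime hn1
  have hqd : (orderOf g0).minFac ∣ orderOf g0 := Nat.minFac_dvd _
  have hmd : orderOf g0 / (orderOf g0).minFac ∣ orderOf g0 := Nat.div_dvd_of_dvd hqd
  have horder2 : orderOf (g0 ^ (orderOf g0 / (orderOf g0).minFac)) = (orderOf g0).minFac := by
    have hmne : orderOf g0 / (orderOf g0).minFac ≠ 0 := by
      have hqpos : 0 < (orderOf g0).minFac := hq.pos
      have hle : (orderOf g0).minFac ≤ orderOf g0 :=
        Nat.le_of_dvd (Nat.pos_of_ne_zero hn0) hqd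
      exact (Nat.div_pos hle hqpos).ne'
    rw [orderOf_pow' g0 hmne, Nat.gcd_eq_right hmd]
    exact Nat.div_div_self hqd hn0
  have hg0m1 : g0 ^ (orderOf g0 / (orderOf g0).minFac) ≠ 1 := by
    intro h1
    rw [h1, orderOf_one] at horder2
    exact hq.one_lt.ne' horder2.symm
  apply hg0m1
  refine hKtf _ (pow_mem hg0K _) _ hq ?_
  rw [← pow_mul, Nat.div_mul_cancel hqd]
  exact pow_orderOf_eq_one g0
end

section
/- If G is a soluble σ-compact p-adic Lie group with derived length n (i.e., G^{(n)} = {1} is the first trivial term of the derived series), then G is elementary and erk(G) ≤ 2n − 1. -/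
open scoped Manifold
open Matrix

universe u

variable {p : ℕ} [Fact p.Prime] {G : Type*} [Group G] [TopologicalSpace G]

/-! ### Auxiliary lemmas for Theorem stmt19 -/

section AuxStmt19
open Set Topology Filter

variable {X : Type*} [TopologicalSpace X]

lemma aux_exists_compact_open_nhd [LocallyCompactSpace X] [T2Space X]
    [TotallyDisconnectedSpace X] {U : Set X} {x : X} (hU : IsOpen U) (hx : x ∈ U) :
    ∃ K : Set X, IsCompact K ∧ IsOpen K ∧ x ∈ K ∧ K ⊆ U := by
  obtain ⟨s, hs, hxs, hsU⟩ := exists_compact_subset hU hx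
  obtain ⟨V, hV, hxV, hVs⟩ :=
    (loc_compact_Haus_tot_disc_of_zero_dim).mem_nhds_iff.1
      (isOpen_interior.mem_nhds hxs)
  exact ⟨V, hs.of_isClosed_subset hV.1 (hVs.trans interior_subset), hV.2, hxV,
    (hVs.trans interior_subset).trans hsU⟩

end AuxStmt19

section AuxStmt19b
open Set Topology Filter
open scoped commutatorElement

variable {A : Type*} [Group A] [TopologicalSpace A] [IsTopologicalGroup A]

/-- The "stabilizer" subgroup of a subset. -/
def auxStab (K : Set A) : Subgroup A where
  carrier := {g | ∀ k ∈ K, g * k ∈ K ∧ g⁻¹ * k ∈ K}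
  one_mem' := by intro k hk; simp only [Set.mem_setOf_eq, one_mul, inv_one]; exact ⟨hk, hk⟩
  mul_mem' := by
    intro a b ha hb k hk
    constructor
    · have h1 := (hb k hk).1; have h2 := (ha _ h1).1; simpa [mul_assoc] using h2
    · have h1 := (ha k hk).2; have h2 := (hb _ h1).2; simpa [mul_assoc] using h2
  inv_mem' := by
    intro a ha k hk
    exact ⟨(ha k hk).2, by simpa using (ha k hk).1⟩

lemma aux_exists_compact_open_subgroup {K : Set A} (hKc : IsCompact K) (hKo : IsOpen K)
    (h1 : (1 : A) ∈ K) :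
    ∃ U : Subgroup A, IsCompact (U : Set A) ∧ IsOpen (U : Set A) ∧ (U : Set A) ⊆ K := by
  obtain ⟨V, hV1, hVK⟩ := compact_open_separated_mul_left hKc hKo subset_rfl
  have hsub : (auxStab K : Set A) ⊆ K := fun g hg => by simpa using (hg 1 h1).1
  have hnhds : (auxStab K : Set A) ∈ 𝓝 (1 : A) := by
    have hinv : (fun g : A => g⁻¹) ⁻¹' V ∈ 𝓝 (1 : A) := by
      simpa using (continuous_inv.continuousAt (x := (1 : A))).preimage_mem_nhds
        (by simpa using hV1)
    filter_upwards [hV1, hinv] with g hgV hgiV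
    intro k hk
    exact ⟨hVK (Set.mul_mem_mul hgV hk), hVK (Set.mul_mem_mul hgiV hk)⟩
  have hopen : IsOpen (auxStab K : Set A) := Subgroup.isOpen_of_mem_nhds _ hnhds
  exact ⟨auxStab K, hKc.of_isClosed_subset ((auxStab K).isClosed_of_isOpen hopen) hsub,
    hopen, hsub⟩

lemma aux_vanDantzig [T2Space A] [LocallyCompactSpace A] [TotallyDisconnectedSpace A]
    {W : Set A} (hW : W ∈ 𝓝 (1 : A)) :
    ∃ U : Subgroup A, IsCompact (U : Set A) ∧ IsOpen (U : Set A) ∧ (U : Set A) ⊆ W := by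
  obtain ⟨O, hOW, hO, h1O⟩ := mem_nhds_iff.1 hW
  obtain ⟨K, hKc, hKo, h1K, hKO⟩ := aux_exists_compact_open_nhd hO h1O
  obtain ⟨U, h1, h2, h3⟩ := aux_exists_compact_open_subgroup hKc hKo h1K
  exact ⟨U, h1, h2, h3.trans (hKO.trans hOW)⟩

lemma aux_commutator_closure_le (B C : Subgroup A) :
    ⁅B.topologicalClosure, C.topologicalClosure⁆ ≤ (⁅B, C⁆ : Subgroup A).topologicalClosure := by
  set D := (⁅B, C⁆ : Subgroup A).topologicalClosure with hD
  have hDc : IsClosed (D : Set A) := Subgroup.isClosed_topologicalClosure _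
  have step1 : ∀ b ∈ C, ∀ a ∈ closure (B : Set A), ⁅a, b⁆ ∈ D := by
    intro b hb
    have hcont : Continuous fun x : A => x * b * x⁻¹ * b⁻¹ := by fun_prop
    have hmap : MapsTo (fun x : A => x * b * x⁻¹ * b⁻¹) (B : Set A) (D : Set A) := by
      intro a ha
      exact (Subgroup.le_topologicalClosure _)
        (Subgroup.commutator_mem_commutator ha hb)
    have h2 := hmap.closure hcont
    intro a ha
    have h3 := h2 ha
    rwa [hDc.closure_eq] at h3
  have step2 : ∀ a ∈ closure (B : Set A), ∀ b ∈ closure (C : Set A), ⁅a, b⁆ ∈ D := by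
    intro a ha
    have hcont : Continuous fun y : A => a * y * a⁻¹ * y⁻¹ := by fun_prop
    have hmap : MapsTo (fun y : A => a * y * a⁻¹ * y⁻¹) (C : Set A) (D : Set A) := by
      intro b hb
      exact step1 b hb a ha
    have h2 := hmap.closure hcont
    intro b hb
    have h3 := h2 hb
    rwa [hDc.closure_eq] at h3
  rw [Subgroup.commutator_le]
  intro a ha b hb
  exact step2 a ha b hb

lemma aux_map_derivedSeries_le {B : Type*} [Group B] (f : B →* A)
    (hf : f.range ≤ (derivedSeries A 1).topologicalClosure) :
    ∀ k, Subgroup.map f (derivedSeries B k) ≤ (derivedSeries A (k + 1)).topologicalClosure := by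
  intro k
  induction k with
  | zero =>
    rw [derivedSeries_zero, ← MonoidHom.range_eq_map]
    exact hf
  | succ k ih =>
    rw [derivedSeries_succ, Subgroup.map_commutator]
    calc ⁅Subgroup.map f (derivedSeries B k), Subgroup.map f (derivedSeries B k)⁆
        ≤ ⁅(derivedSeries A (k + 1)).topologicalClosure,
            (derivedSeries A (k + 1)).topologicalClosure⁆ := Subgroup.commutator_mono ih ih
      _ ≤ (⁅derivedSeries A (k + 1), derivedSeries A (k + 1)⁆ : Subgroup A).topologicalClosure :=
          aux_commutator_closure_le _ _
      _ = (derivedSeries A (k + 2)).topologicalClosure := by rw [← derivedSeries_succ]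

omit [TopologicalSpace A] [IsTopologicalGroup A] in
lemma aux_normal_of_derived_le (K : Subgroup A) (hK : derivedSeries A 1 ≤ K) : K.Normal := by
  constructor
  intro k hk g
  have h1 : ⁅g, k⁆ ∈ K := by
    apply hK
    rw [derivedSeries_one]
    exact Subgroup.commutator_mem_commutator (Subgroup.mem_top g) (Subgroup.mem_top k)
  have h2 := mul_mem h1 hk
  have h3 : ⁅g, k⁆ * k = g * k * g⁻¹ := by group
  rwa [h3] at h2

lemma aux_td_of_connectedComponent_one (h : connectedComponent (1 : A) ⊆ {1}) :
    TotallyDisconnectedSpace A := by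
  rw [totallyDisconnectedSpace_iff_connectedComponent_singleton]
  intro x
  refine subset_antisymm ?_ (singleton_subset_iff.2 mem_connectedComponent)
  intro y hy
  have hconn : IsPreconnected ((fun r => x⁻¹ * r) '' connectedComponent x) :=
    (isPreconnected_connectedComponent).image _
      (by fun_prop : Continuous fun r : A => x⁻¹ * r).continuousOn
  have hsub : (fun r => x⁻¹ * r) '' connectedComponent x ⊆ connectedComponent (1 : A) := by
    apply hconn.subset_connectedComponent
    exact ⟨x, mem_connectedComponent, by simp⟩
  have h1 : x⁻¹ * y ∈ ({1} : Set A) := h (hsub ⟨y, hy, rfl⟩)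
  have h2 : x⁻¹ * y = 1 := h1
  simp only [mem_singleton_iff]
  rw [← mul_left_cancel_iff (a := x⁻¹), h2, inv_mul_cancel]

lemma aux_quotient_td [T2Space A] [LocallyCompactSpace A] [TotallyDisconnectedSpace A]
    (N : Subgroup A) [N.Normal] (hN : IsClosed (N : Set A)) :
    TotallyDisconnectedSpace (A ⧸ N) := by
  apply aux_td_of_connectedComponent_one
  intro q hq
  simp only [mem_singleton_iff]
  by_contra hq1
  obtain ⟨x, rfl⟩ := QuotientGroup.mk_surjective q
  have hxN : x ∉ N := fun hxN => hq1 ((QuotientGroup.eq_one_iff x).2 hxN)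
  have hO : IsOpen ((N : Set A)ᶜ) := hN.isOpen_compl
  have hW : IsOpen ((fun y : A => y * x) ⁻¹' (N : Set A)ᶜ) := hO.preimage (by fun_prop)
  have h1W : (1 : A) ∈ (fun y : A => y * x) ⁻¹' (N : Set A)ᶜ := by
    simp only [mem_preimage, one_mul, mem_compl_iff]
    exact hxN
  obtain ⟨V, hVc, hVo, hVW⟩ := aux_vanDantzig (hW.mem_nhds h1W)
  set P : Subgroup (A ⧸ N) := Subgroup.map (QuotientGroup.mk' N) V with hP
  have hPcoe : (P : Set (A ⧸ N)) = QuotientGroup.mk '' (V : Set A) := by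
    rw [hP, Subgroup.coe_map]; rfl
  have hPopen : IsOpen (P : Set (A ⧸ N)) := by
    rw [hPcoe]; exact QuotientGroup.isOpenMap_coe _ hVo
  have hPclopen : IsClopen (P : Set (A ⧸ N)) :=
    ⟨P.isClosed_of_isOpen hPopen, hPopen⟩
  have hqP : (QuotientGroup.mk x : A ⧸ N) ∈ (P : Set (A ⧸ N)) :=
    hPclopen.connectedComponent_subset P.one_mem hq
  rw [hPcoe] at hqP
  obtain ⟨v, hvV, hvx⟩ := hqP
  have hvN : v⁻¹ * x ∈ N := (QuotientGroup.eq (s := N)).1 hvx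
  have hvi : (v⁻¹ : A) ∈ (V : Set A) := V.inv_mem hvV
  have h2 := hVW hvi
  simp only [mem_preimage, mem_compl_iff] at h2
  exact h2 hvN

lemma aux_quotient_discrete (N : Subgroup A) (hNo : IsOpen (N : Set A)) :
    DiscreteTopology (A ⧸ N) := by
  rw [discreteTopology_iff_isOpen_singleton]
  intro q
  obtain ⟨x, rfl⟩ := QuotientGroup.mk_surjective q
  rw [← (QuotientGroup.isQuotientMap_mk N).isOpen_preimage]
  have heq : (QuotientGroup.mk : A → A ⧸ N) ⁻¹' {(QuotientGroup.mk x : A ⧸ N)}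
      = (fun y : A => x⁻¹ * y) ⁻¹' (N : Set A) := by
    ext y
    simp only [mem_preimage, mem_singleton_iff, SetLike.mem_coe]
    rw [QuotientGroup.eq]
    constructor
    · intro hy; have := N.inv_mem hy; simpa [_root_.mul_inv_rev] using this
    · intro hy; have := N.inv_mem hy; simpa [_root_.mul_inv_rev] using this
  rw [heq]
  exact hNo.preimage (by fun_prop)

lemma aux_quotient_countable [SigmaCompactSpace A] (N : Subgroup A)
    (hNo : IsOpen (N : Set A)) : Countable (A ⧸ N) := by
  haveI := aux_quotient_discrete N hNo
  rw [← Set.countable_univ_iff]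
  have huniv : (univ : Set (A ⧸ N)) = ⋃ n, (QuotientGroup.mk : A → A ⧸ N) '' compactCovering A n := by
    rw [← image_iUnion, iUnion_compactCovering, image_univ,
      (QuotientGroup.mk_surjective (s := N)).range_eq]
  rw [huniv]
  exact countable_iUnion fun n =>
    (((isCompact_compactCovering A n).image QuotientGroup.continuous_mk).finite_of_discrete).countable

end AuxStmt19b

section AuxKey
open Set Topology Filter Pointwise

lemma aux_TDLCSC (A : Type u) [Group A] [TopologicalSpace A] [IsTopologicalGroup A] [T2Space A]
    [LocallyCompactSpace A] [TotallyDisconnectedSpace A] [SecondCountableTopology A] :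
    TDLCSC A :=
  ⟨inferInstance, inferInstance, inferInstance, inferInstance, inferInstance⟩

lemma aux_key : ∀ (n : ℕ) (A : Type u) [Group A] [TopologicalSpace A]
    [IsTopologicalGroup A] [T2Space A] [LocallyCompactSpace A] [TotallyDisconnectedSpace A]
    [SecondCountableTopology A] [SigmaCompactSpace A], derivedSeries A n = ⊥ →
    SigmaClass ((2 * n - 1 : ℕ) : Ordinal.{u}) A := by
  intro n
  induction n with
  | zero =>
    intro A _ _ _ _ _ _ _ _ h
    rw [derivedSeries_zero] at h
    haveI hsub : Subsingleton A := by
      constructor; intro a b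
      have ha : a ∈ (⊥ : Subgroup A) := h ▸ Subgroup.mem_top a
      have hb : b ∈ (⊥ : Subgroup A) := h ▸ Subgroup.mem_top b
      rw [Subgroup.mem_bot] at ha hb; rw [ha, hb]
    haveI hdisc : DiscreteTopology A := by
      rw [discreteTopology_iff_isOpen_singleton]
      intro a
      have : ({a} : Set A) = univ :=
        Set.eq_univ_of_forall (fun b => by rw [Subsingleton.elim b a]; exact rfl)
      rw [this]; exact isOpen_univ
    exact SigmaClass.base _ A ⟨aux_TDLCSC A, Or.inl ⟨inferInstance, hdisc⟩⟩
  | succ n IH =>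
    cases n with
    | zero =>
      intro A _ _ _ _ _ _ _ _ h
      obtain ⟨U, hUc, hUo, -⟩ := aux_vanDantzig (A := A) (W := univ) univ_mem
      have hUcl : IsClosed (U : Set A) := U.isClosed_of_isOpen hUo
      haveI hUnormal : U.Normal := by
        apply aux_normal_of_derived_le
        rw [h]; exact bot_le
      haveI : CompactSpace ↥U := isCompact_iff_compactSpace.1 hUc
      haveI : LocallyCompactSpace ↥U := hUcl.locallyCompactSpace
      haveI : SecondCountableTopology ↥U := Topology.IsInducing.subtypeVal.secondCountableTopology
      have hSZU : SigmaZero ↥U :=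
        ⟨aux_TDLCSC _, Or.inr ⟨inferInstance, inferInstance, inferInstance, inferInstance⟩⟩
      haveI hdq : DiscreteTopology (A ⧸ U) := aux_quotient_discrete U hUo
      have hcq : Countable (A ⧸ U) := aux_quotient_countable U hUo
      have hSZQ : SigmaZero (A ⧸ U) := ⟨aux_TDLCSC _, Or.inl ⟨hcq, hdq⟩⟩
      have hres := SigmaClass.ext 0 A U hUnormal (aux_TDLCSC A) hUcl
        (SigmaClass.base _ _ hSZU) hSZQ
      have e : ((2 * (0 + 1) - 1 : ℕ) : Ordinal.{u}) = (0 : Ordinal.{u}) + 1 := by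
        rw [show (2 * (0 + 1) - 1 : ℕ) = 1 from rfl, Nat.cast_one, zero_add]
      rw [e]
      exact hres
    | succ m =>
      intro A _ _ _ _ _ _ _ _ h
      -- h : derivedSeries A (m + 2) = ⊥
      set H : Subgroup A := (derivedSeries A 1).topologicalClosure with hH
      have hHc : IsClosed (H : Set A) := Subgroup.isClosed_topologicalClosure _
      haveI hDn : (derivedSeries A 1).Normal := derivedSeries_normal A 1
      haveI hHn : H.Normal := Subgroup.is_normal_topologicalClosure _
      obtain ⟨U, hUc, hUo, -⟩ := aux_vanDantzig (A := A) (W := univ) univ_mem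
      set K' : Subgroup A := U ⊔ H with hK'
      have hUK : U ≤ K' := le_sup_left
      have hHK : H ≤ K' := le_sup_right
      have hK'o : IsOpen (K' : Set A) := Subgroup.isOpen_mono hUK hUo
      have hK'cl : IsClosed (K' : Set A) := K'.isClosed_of_isOpen hK'o
      haveI hK'n : K'.Normal :=
        aux_normal_of_derived_le K' ((Subgroup.le_topologicalClosure _).trans hHK)
      haveI : LocallyCompactSpace ↥K' := by exact hK'cl.locallyCompactSpace
      haveI : SigmaCompactSpace ↥K' := by exact hK'cl.sigmaCompactSpace
      haveI : SecondCountableTopology ↥K' := Topology.IsInducing.subtypeVal.secondCountableTopology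
      set N : Subgroup ↥K' := H.subgroupOf K' with hN
      haveI hNn : N.Normal := hHn.subgroupOf K'
      have hNcoe : (N : Set ↥K') = (Subtype.val : ↥K' → A) ⁻¹' (H : Set A) := by
        ext x; simp [hN, Subgroup.mem_subgroupOf]
      have hNcl : IsClosed (N : Set ↥K') := by
        rw [hNcoe]; exact hHc.preimage continuous_subtype_val
      haveI : LocallyCompactSpace ↥N := by exact hNcl.locallyCompactSpace
      haveI : SigmaCompactSpace ↥N := by exact hNcl.sigmaCompactSpace
      haveI : SecondCountableTopology ↥N := Topology.IsInducing.subtypeVal.secondCountableTopology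
      -- solubility of N with derived length ≤ m + 1
      have hsol : derivedSeries ↥N (m + 1) = ⊥ := by
        set ι : ↥N →* A := K'.subtype.comp N.subtype with hι
        have hιinj : Function.Injective ι := by
          rw [hι, MonoidHom.coe_comp]
          exact K'.subtype_injective.comp N.subtype_injective
        have hrange : ι.range ≤ (derivedSeries A 1).topologicalClosure := by
          rintro x ⟨y, rfl⟩
          exact y.2
        have hle := aux_map_derivedSeries_le ι hrange (m + 1)
        rw [h] at hle
        have hbot : ((⊥ : Subgroup A)).topologicalClosure = ⊥ :=
          le_bot_iff.1 (Subgroup.topologicalClosure_minimal ⊥ le_rfl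
            (by rw [Subgroup.coe_bot]; exact isClosed_singleton))
        rw [hbot, le_bot_iff] at hle
        exact (Subgroup.map_eq_bot_iff_of_injective _ hιinj).1 hle
      have hIH := IH ↥N hsol
      -- K' / N is profinite
      haveI : CompactSpace (↥K' ⧸ N) := by
        have hS : IsCompact ((Subtype.val : ↥K' → A) ⁻¹' (U : Set A)) := by
          have himg : (Subtype.val : ↥K' → A) '' ((Subtype.val : ↥K' → A) ⁻¹' (U : Set A))
              = (U : Set A) := by
            apply subset_antisymm
            · rintro _ ⟨y, hy, rfl⟩; exact hy
            · intro u hu; exact ⟨⟨u, hUK hu⟩, hu, rfl⟩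
          rw [Topology.IsEmbedding.subtypeVal.isCompact_iff, himg]
          exact hUc
        have hsurj : (univ : Set (↥K' ⧸ N))
            ⊆ QuotientGroup.mk '' ((Subtype.val : ↥K' → A) ⁻¹' (U : Set A)) := by
          rintro q -
          obtain ⟨x, rfl⟩ := QuotientGroup.mk_surjective q
          have hx : (x : A) ∈ (U : Set A) * (H : Set A) := by
            rw [← Subgroup.mul_normal U H]
            exact x.2
          obtain ⟨u, hu, hh, hhH, hux⟩ := hx
          refine ⟨⟨u, hUK hu⟩, by simpa using hu, ?_⟩
          rw [QuotientGroup.eq]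
          have hmem : (⟨u, hUK hu⟩ : ↥K')⁻¹ * x ∈ N ↔ u⁻¹ * (x : A) ∈ H := by
            simp [hN, Subgroup.mem_subgroupOf]
          rw [hmem, ← hux]
          simpa [mul_assoc] using hhH
        have huniv : (univ : Set (↥K' ⧸ N))
            = QuotientGroup.mk '' ((Subtype.val : ↥K' → A) ⁻¹' (U : Set A)) :=
          subset_antisymm hsurj (subset_univ _)
        exact isCompact_univ_iff.1 (huniv ▸ hS.image QuotientGroup.continuous_mk)
      haveI hT3 : T3Space (↥K' ⧸ N) := QuotientGroup.instT3Space (N := N) (hN := hNcl)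
      haveI htd : TotallyDisconnectedSpace (↥K' ⧸ N) := aux_quotient_td N hNcl
      have hSZQ1 : SigmaZero (↥K' ⧸ N) :=
        ⟨aux_TDLCSC _, Or.inr ⟨inferInstance, inferInstance, inferInstance, inferInstance⟩⟩
      have hext1 := SigmaClass.ext _ ↥K' N hNn (aux_TDLCSC _) hNcl hIH hSZQ1
      -- A / K' is countable discrete
      haveI hdq : DiscreteTopology (A ⧸ K') := aux_quotient_discrete K' hK'o
      have hcq : Countable (A ⧸ K') := aux_quotient_countable K' hK'o
      have hSZQ2 : SigmaZero (A ⧸ K') := ⟨aux_TDLCSC _, Or.inl ⟨hcq, hdq⟩⟩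
      have hext2 := SigmaClass.ext _ A K' hK'n (aux_TDLCSC A) hK'cl hext1 hSZQ2
      convert hext2 using 2
      rw [show 2 * (m + 1 + 1) - 1 = (2 * (m + 1) - 1) + 1 + 1 by omega]
      simp only [Nat.cast_add, Nat.cast_one]

end AuxKey

/-- Remark 3.6: soluble σ-compact p-adic Lie groups of derived length `n`
are elementary of rank at most `2n - 1`. -/
theorem stmt19 {G : Type u} [Group G] [TopologicalSpace G] (h : PadicLieGroup p G)
    [SigmaCompactSpace G] (n : ℕ) (hlen : derivedSeries G n = ⊥)
    (hfirst : ∀ m < n, derivedSeries G m ≠ ⊥) :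
    IsElementary G ∧ erk G ≤ ((2 * n - 1 : ℕ) : Ordinal) := by
  letI := h.charted
  haveI hlie : LieGroup (𝓘(ℚ_[p], Fin h.dim → ℚ_[p])) (⊤ : ℕ∞) G := h.lie
  haveI : ContinuousMul G :=
    ⟨(contMDiff_mul (𝓘(ℚ_[p], Fin h.dim → ℚ_[p])) (⊤ : ℕ∞) (G := G)).continuous⟩
  haveI : ContinuousInv G :=
    ⟨(LieGroup.contMDiff_inv (I := 𝓘(ℚ_[p], Fin h.dim → ℚ_[p])) (n := (⊤ : ℕ∞)) (G := G)).continuous⟩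
  haveI : IsTopologicalGroup G := ⟨⟩
  haveI : LocallyCompactSpace G :=
    ChartedSpace.locallyCompactSpace (Fin h.dim → ℚ_[p]) G
  haveI : T2Space G := by
    rw [IsTopologicalGroup.t2Space_iff_one_closed, ← isOpen_compl_iff]
    rw [isOpen_iff_forall_mem_open]
    intro x hx
    have hx1 : x ≠ 1 := by simpa using hx
    set e := chartAt (Fin h.dim → ℚ_[p]) x with he
    by_cases h1 : (1 : G) ∈ e.source
    · have hne : e x ≠ e 1 := fun heq => hx1 (e.injOn (mem_chart_source _ x) h1 heq)
      refine ⟨e.source ∩ e ⁻¹' ({e 1}ᶜ), ?_, e.isOpen_inter_preimage isOpen_compl_singleton,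
        ⟨mem_chart_source _ x, hne⟩⟩
      rintro y ⟨hy1, hy2⟩
      simp only [Set.mem_compl_iff, Set.mem_singleton_iff]
      intro hy3
      rw [hy3] at hy2
      exact hy2 rfl
    · refine ⟨e.source, ?_, e.open_source, mem_chart_source _ x⟩
      intro y hy
      simp only [Set.mem_compl_iff, Set.mem_singleton_iff]
      intro hy1
      rw [hy1] at hy
      exact h1 hy
  haveI : TotallyDisconnectedSpace G := by
    set e := chartAt (Fin h.dim → ℚ_[p]) (1 : G) with he
    obtain ⟨C, hCc, hCo, hC1, hCt⟩ :=
      aux_exists_compact_open_nhd e.open_target (e.map_source (mem_chart_source _ _))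
    set K : Set G := e.source ∩ e ⁻¹' C with hK
    have hKo : IsOpen K := e.isOpen_inter_preimage hCo
    have hKc : IsCompact K := by
      have hKeq : K = e.symm '' C := (e.symm_image_eq_source_inter_preimage hCt).symm
      rw [hKeq]
      exact hCc.image_of_continuousOn (e.continuousOn_symm.mono hCt)
    have h1K : (1 : G) ∈ K := ⟨mem_chart_source _ _, hC1⟩
    obtain ⟨U, hUc, hUo, hUK⟩ := aux_exists_compact_open_subgroup hKc hKo h1K
    apply aux_td_of_connectedComponent_one
    have hsub : connectedComponent (1 : G) ⊆ (U : Set G) :=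
      IsClopen.connectedComponent_subset ⟨U.isClosed_of_isOpen hUo, hUo⟩ U.one_mem
    have hsrc : connectedComponent (1 : G) ⊆ e.source :=
      hsub.trans (hUK.trans Set.inter_subset_left)
    have himg : IsPreconnected (e '' connectedComponent (1 : G)) :=
      isPreconnected_connectedComponent.image _ (e.continuousOn.mono hsrc)
    have hsing : (e '' connectedComponent (1 : G)).Subsingleton := himg.subsingleton
    intro x hx
    simp only [Set.mem_singleton_iff]
    have hxe : e x = e 1 := hsing ⟨x, hx, rfl⟩ ⟨1, mem_connectedComponent, rfl⟩
    exact e.injOn (hsrc hx) (mem_chart_source _ _) hxe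
  haveI : SecondCountableTopology G :=
    ChartedSpace.secondCountable_of_sigmaCompact (Fin h.dim → ℚ_[p]) G
  have hkey := aux_key n G hlen
  exact ⟨⟨_, hkey⟩, csInf_le' hkey⟩
end
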